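/- arXiv:2212.12788 — 8 statements merged into one kernel-verified Lean document; each statement's English description precedes it below -/
import Mathlib

section
/- The map F : S → 𝒜, F(t) = exp(−t)·c·exp(t), is Fréchet differentiable at every t ∈ S, and its Fréchet derivative DF(t) : S → 𝒜 is the continuous linear map s ↦ exp(−t)·(c·s − s·c)·exp(t). -/
open NormedSpace

/-- Let `𝒜` be a complex unital Banach algebra, `S ⊆ 𝒜` a closed linear
subspace whose elements pairwise commute, and `c ∈ 𝒜`.  The map `F : S → 𝒜`,
`F(t) = exp(−t)·c·exp(t)`, is Fréchet differentiable at every `t ∈ S`, and its Fréchet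
derivative `DF(t) : S → 𝒜` is the continuous linear map `s ↦ exp(−t)·(c·s − s·c)·exp(t)`. -/
theorem cc_function_frechet_derivative
    {𝒜 : Type*} [NormedRing 𝒜] [NormedAlgebra ℂ 𝒜] [CompleteSpace 𝒜]
    (S : Submodule ℂ 𝒜) (hSclosed : IsClosed (S : Set 𝒜))
    (hScomm : ∀ x y : S, (x : 𝒜) * (y : 𝒜) = (y : 𝒜) * (x : 𝒜)) (c : 𝒜) (t : S) :
    ∃ D : S →L[ℂ] 𝒜,
      (∀ s : S, D s =
        NormedSpace.exp (-(t : 𝒜)) * (c * (s : 𝒜) - (s : 𝒜) * c) * NormedSpace.exp (t : 𝒜)) ∧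
      HasFDerivAt
        (fun u : S => NormedSpace.exp (-(u : 𝒜)) * c * NormedSpace.exp (u : 𝒜)) D t := by
  set ι : S →L[ℂ] 𝒜 := S.subtypeL with hι
  have hcomm : ∀ u : S, Commute (t : 𝒜) (u : 𝒜) := fun u => (hScomm t u)
  -- derivative of u ↦ exp u at t
  have haff2 : HasFDerivAt (fun u : S => (u : 𝒜) - (t : 𝒜)) ι t :=
    ι.hasFDerivAt.sub_const _
  have h0 : HasFDerivAt (exp) (1 : 𝒜 →L[ℂ] 𝒜)
      ((fun u : S => (u : 𝒜) - (t : 𝒜)) t) := by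
    simpa using (hasFDerivAt_exp_zero (𝕂 := ℂ) (𝔸 := 𝒜))
  have h2 : HasFDerivAt (fun u : S => exp (u : 𝒜))
      (exp (t : 𝒜) • ((1 : 𝒜 →L[ℂ] 𝒜).comp ι)) t := by
    have h := (h0.comp t haff2).const_mul (exp (t : 𝒜))
    simp only [Function.comp_def] at h
    have hfun : (fun u : S => exp (t : 𝒜) * exp ((u : 𝒜) - (t : 𝒜)))
        = fun u : S => exp (u : 𝒜) := by
      funext u
      letI : NormedAlgebra ℚ 𝒜 := NormedAlgebra.restrictScalars ℚ ℂ 𝒜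
      rw [← exp_add_of_commute ((hcomm u).sub_right (Commute.refl (t : 𝒜)))]
      norm_num
    rw [hfun] at h
    exact h
  -- derivative of u ↦ exp (-u) at t
  have haff1 : HasFDerivAt (fun u : S => (t : 𝒜) - (u : 𝒜)) (-ι) t :=
    (ι.hasFDerivAt.const_sub _)
  have h0' : HasFDerivAt (exp) (1 : 𝒜 →L[ℂ] 𝒜)
      ((fun u : S => (t : 𝒜) - (u : 𝒜)) t) := by
    simpa using (hasFDerivAt_exp_zero (𝕂 := ℂ) (𝔸 := 𝒜))
  have h1 : HasFDerivAt (fun u : S => exp (-(u : 𝒜)))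
      (exp (-(t : 𝒜)) • ((1 : 𝒜 →L[ℂ] 𝒜).comp (-ι))) t := by
    have h := (h0'.comp t haff1).const_mul (exp (-(t : 𝒜)))
    simp only [Function.comp_def] at h
    have hfun : (fun u : S => exp (-(t : 𝒜)) * exp ((t : 𝒜) - (u : 𝒜)))
        = fun u : S => exp (-(u : 𝒜)) := by
      funext u
      letI : NormedAlgebra ℚ 𝒜 := NormedAlgebra.restrictScalars ℚ ℂ 𝒜
      rw [← exp_add_of_commute (((Commute.refl (t : 𝒜)).sub_right (hcomm u)).neg_left)]
      congr 1
      abel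
    rw [hfun] at h
    exact h
  -- assemble via product rule
  have hF := (h1.mul_const' c).mul' h2
  refine ⟨_, ?_, hF⟩
  intro s
  have hst : (s : 𝒜) * exp (t : 𝒜) = exp (t : 𝒜) * (s : 𝒜) :=
    ((hcomm s).exp_left).symm.eq
  simp only [ContinuousLinearMap.add_apply, ContinuousLinearMap.smul_apply,
    ContinuousLinearMap.smulRight_apply, ContinuousLinearMap.comp_apply,
    ContinuousLinearMap.neg_apply, ContinuousLinearMap.one_apply, smul_eq_mul,
    Submodule.coe_subtypeL', Submodule.coe_subtype, hι,
    MulOpposite.smul_eq_mul_unop, MulOpposite.unop_op, neg_smul, one_smul]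
  rw [← hst]
  noncomm_ring
end

section
/- Let X be a complex Banach space, let 𝒮 be a closed linear subspace of the Banach algebra of bounded linear operators on X whose elements pairwise commute, let c be a bounded linear operator on X and ψ₀ ∈ X, and define g : 𝒮 → X by g(t) = exp(−t)(c(exp(t)ψ₀)). If t* ∈ 𝒮 and E ∈ ℂ satisfy c(exp(t*)ψ₀) = E·exp(t*)ψ₀, then g is Fréchet differentiable at t* with Fréchet derivative Dg(t*)s = exp(−t*)((c − E·I)(exp(t*)(sψ₀))) for every s ∈ 𝒮, where I is the identity operator. -/
open NormedSpace Asymptotics ContinuousLinearMap Topology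

lemma exp_comm_hasFDerivAt {A : Type*} [NormedRing A] [NormedAlgebra ℂ A] [CompleteSpace A]
    (𝒮 : Submodule ℂ A) (hcomm : ∀ x y : 𝒮, Commute (x : A) (y : A)) (t : 𝒮) :
    HasFDerivAt (fun u : 𝒮 => exp (u : A))
      ((ContinuousLinearMap.mul ℂ A (exp (t : A))).comp 𝒮.subtypeL) t := by
  rw [hasFDerivAt_iff_isLittleO_nhds_zero]
  have h0 : (fun s : A => exp (0 + s) - exp 0 - (1 : A →L[ℂ] A) s) =o[𝓝 0] fun s => s := by
    rw [← hasFDerivAt_iff_isLittleO_nhds_zero]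
    exact hasFDerivAt_exp_zero
  have htend : Filter.Tendsto (fun s : 𝒮 => (s : A)) (𝓝 0) (𝓝 0) := by
    simpa using 𝒮.subtypeL.continuous.tendsto 0
  have h1 : (fun s : 𝒮 => exp ((s : A)) - 1 - (s : A)) =o[𝓝 0] fun s : 𝒮 => (s : A) := by
    simpa [Function.comp_def] using (h0.comp_tendsto htend)
  have h2 : (fun s : 𝒮 => exp ((s : A)) - 1 - (s : A)) =o[𝓝 0] fun s : 𝒮 => s :=
    h1.trans_isBigO (𝒮.subtypeL.isBigO_id _)
  have h3 := h2.const_mul_left (exp (t : A))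
  refine h3.congr_left fun s => ?_
  have hc : Commute (t : A) (s : A) := hcomm t s
  have : exp ((↑(t + s) : A)) = exp (t : A) * exp (s : A) := by
    letI : NormedAlgebra ℚ A := .restrictScalars ℚ ℂ A
    rw [Submodule.coe_add]; exact exp_add_of_commute hc
  simp only [this, ContinuousLinearMap.comp_apply, Submodule.subtypeL_apply,
    ContinuousLinearMap.mul_apply']
  rw [mul_sub, mul_sub, mul_one]

set_option maxHeartbeats 2000000 in
/-- Let `X` be a complex Banach space, `𝒮` a closed linear subspace of the
algebra of bounded operators on `X` whose elements pairwise commute, `c` a bounded operator,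
`ψ₀ ∈ X`, and `g : 𝒮 → X` given by `g(t) = exp(−t)(c(exp(t)ψ₀))`.  If `t* ∈ 𝒮` and `E ∈ ℂ`
satisfy `c(exp(t*)ψ₀) = E·exp(t*)ψ₀`, then `g` is Fréchet differentiable at `t*` with derivative
`Dg(t*)s = exp(−t*)((c − E·I)(exp(t*)(sψ₀)))`. -/
theorem cc_frechet_derivative_at_zero
    {X : Type*} [NormedAddCommGroup X] [NormedSpace ℂ X] [CompleteSpace X]
    (𝒮 : Submodule ℂ (X →L[ℂ] X)) (h𝒮closed : IsClosed (𝒮 : Set (X →L[ℂ] X)))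
    (h𝒮comm : ∀ x y : 𝒮, (x : X →L[ℂ] X) ∘L (y : X →L[ℂ] X) = (y : X →L[ℂ] X) ∘L (x : X →L[ℂ] X))
    (c : X →L[ℂ] X) (ψ₀ : X) (tstar : 𝒮) (E : ℂ)
    (heig : c (NormedSpace.exp (tstar : X →L[ℂ] X) ψ₀) =
      E • NormedSpace.exp (tstar : X →L[ℂ] X) ψ₀) :
    ∃ D : 𝒮 →L[ℂ] X,
      (∀ s : 𝒮, D s =
        NormedSpace.exp (-(tstar : X →L[ℂ] X))
          ((c - E • (1 : X →L[ℂ] X))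
            (NormedSpace.exp (tstar : X →L[ℂ] X) ((s : X →L[ℂ] X) ψ₀)))) ∧
      HasFDerivAt
        (fun t : 𝒮 =>
          NormedSpace.exp (-(t : X →L[ℂ] X))
            (c (NormedSpace.exp (t : X →L[ℂ] X) ψ₀)))
        D tstar := by
  have hcomm : ∀ x y : 𝒮, Commute (x : X →L[ℂ] X) (y : X →L[ℂ] X) := fun x y => h𝒮comm x y
  -- derivative of exp
  have hexp := exp_comm_hasFDerivAt 𝒮 hcomm tstar
  -- derivative of exp ∘ neg
  have hnegfun : HasFDerivAt (fun u : 𝒮 => -u) (-(ContinuousLinearMap.id ℂ 𝒮)) tstar := by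
    exact HasFDerivAt.fun_neg (𝕜 := ℂ) (E := 𝒮) (F := 𝒮) (hasFDerivAt_id tstar)
  have hexpneg : HasFDerivAt (fun u : 𝒮 => exp (-(u : X →L[ℂ] X)))
      (((ContinuousLinearMap.mul ℂ (X →L[ℂ] X) (exp (-(tstar : X →L[ℂ] X)))).comp 𝒮.subtypeL).comp
        (-(ContinuousLinearMap.id ℂ 𝒮))) tstar := by
    have := (exp_comm_hasFDerivAt 𝒮 hcomm (-tstar)).comp tstar hnegfun
    simpa [Function.comp_def] using this
  -- derivative of fun u => c * exp u
  have h1 : HasFDerivAt (fun u : 𝒮 => c * exp (u : X →L[ℂ] X))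
      ((ContinuousLinearMap.mul ℂ (X →L[ℂ] X) c).comp
        ((ContinuousLinearMap.mul ℂ (X →L[ℂ] X) (exp (tstar : X →L[ℂ] X))).comp 𝒮.subtypeL)) tstar :=
    ((ContinuousLinearMap.mul ℂ (X →L[ℂ] X) c).hasFDerivAt).comp tstar hexp
  -- product rule
  have hG := HasFDerivAt.fun_mul' (𝕜 := ℂ) (E := 𝒮) (𝔸 := X →L[ℂ] X) hexpneg h1
  -- evaluate at ψ₀
  have hev := ((ContinuousLinearMap.apply ℂ X ψ₀).hasFDerivAt).comp tstar hG
  refine ⟨_, fun s => ?_, hev⟩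
  have hexpinv : exp (-(tstar : X →L[ℂ] X)) * exp (tstar : X →L[ℂ] X) = 1 := by
    letI : NormedAlgebra ℚ (X →L[ℂ] X) := .restrictScalars ℚ ℂ _
    rw [← exp_add_of_commute (Commute.refl (tstar : X →L[ℂ] X)).neg_left, neg_add_cancel, exp_zero]
  have hsc : (s : X →L[ℂ] X) * exp (tstar : X →L[ℂ] X) = exp (tstar : X →L[ℂ] X) * (s : X →L[ℂ] X) :=
    ((hcomm s tstar).exp_right).eq
  simp only [ContinuousLinearMap.comp_apply, ContinuousLinearMap.add_apply,
    ContinuousLinearMap.smul_apply, ContinuousLinearMap.smulRight_apply,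
    ContinuousLinearMap.apply_apply, ContinuousLinearMap.neg_apply,
    ContinuousLinearMap.id_apply, Submodule.subtypeL_apply, ContinuousLinearMap.mul_apply',
    ContinuousLinearMap.sub_apply, ContinuousLinearMap.one_apply, smul_eq_mul, op_smul_eq_mul]
  have key : ∀ v : X, NormedSpace.exp (-(tstar : X →L[ℂ] X))
      (NormedSpace.exp (tstar : X →L[ℂ] X) v) = v := by
    intro v
    show (NormedSpace.exp (-(tstar : X →L[ℂ] X)) * NormedSpace.exp (tstar : X →L[ℂ] X)) v = v
    rw [hexpinv, ContinuousLinearMap.one_apply]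
  have hs' : (s : X →L[ℂ] X) (NormedSpace.exp (tstar : X →L[ℂ] X) ψ₀)
      = NormedSpace.exp (tstar : X →L[ℂ] X) ((s : X →L[ℂ] X) ψ₀) := by
    have := congrArg (fun M : X →L[ℂ] X => M ψ₀) hsc
    simpa [ContinuousLinearMap.mul_apply'] using this
  have lhs2 : (NormedSpace.exp (-(tstar : X →L[ℂ] X)) * (↑(-s) : X →L[ℂ] X) *
      (c * NormedSpace.exp (tstar : X →L[ℂ] X))) ψ₀ = -(E • ((s : X →L[ℂ] X) ψ₀)) := by
    show NormedSpace.exp (-(tstar : X →L[ℂ] X))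
      ((↑(-s) : X →L[ℂ] X) (c (NormedSpace.exp (tstar : X →L[ℂ] X) ψ₀))) = _
    rw [heig, NegMemClass.coe_neg, ContinuousLinearMap.neg_apply, map_neg, neg_inj,
      map_smul, map_smul, hs', key]
  rw [lhs2, map_sub, map_smul, key]
  show NormedSpace.exp (-(tstar : X →L[ℂ] X))
      (c (NormedSpace.exp (tstar : X →L[ℂ] X) ((s : X →L[ℂ] X) ψ₀))) + _ = _
  rw [sub_eq_add_neg]
end

section
/- Assume Hψ* = E·ψ* and that the kernel of H − E·I is contained in the complex span of ψ* (i.e. every x with Hx = E·x is a scalar multiple of ψ*). Then A is injective on W: if φ ∈ W satisfies Q(B⁻¹((H − E)(Bφ))) = 0, then φ = 0. -/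
open scoped InnerProductSpace
open ContinuousLinearMap

/-- In a complex Hilbert space `𝓗`, with `H` bounded self-adjoint, `E ∈ ℝ`,
`B` a continuous linear automorphism, `ψ* ≠ 0`, `ψ₀ := B⁻¹ψ*`, `W := {ψ₀}^⊥`, `Q` the
orthogonal projection onto `W`, and `Aφ := Q(B⁻¹((H − E)(Bφ)))`: assume `Hψ* = E·ψ*` and that
the kernel of `H − E·I` is contained in the complex span of `ψ*`.  Then `A` is injective on
`W`: if `φ ∈ W` satisfies `Q(B⁻¹((H − E)(Bφ))) = 0`, then `φ = 0`. -/
theorem cc_induced_operator_injective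
    {𝓗 : Type*} [NormedAddCommGroup 𝓗] [InnerProductSpace ℂ 𝓗] [CompleteSpace 𝓗]
    (H : 𝓗 →L[ℂ] 𝓗) (hH : IsSelfAdjoint H) (E : ℝ)
    (B : 𝓗 ≃L[ℂ] 𝓗) (ψs : 𝓗) (hψs : ψs ≠ 0)
    (heig : H ψs = (E : ℂ) • ψs)
    (hker : ∀ x : 𝓗, H x = (E : ℂ) • x → ∃ z : ℂ, x = z • ψs) :
    let ψ0 : 𝓗 := B.symm ψs
    let W : Submodule ℂ 𝓗 := (ℂ ∙ ψ0)ᗮ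
    let Q : 𝓗 →L[ℂ] W := W.orthogonalProjectionOnto
    ∀ φ : W,
      Q ((B.symm : 𝓗 →L[ℂ] 𝓗)
        ((H - (E : ℂ) • (1 : 𝓗 →L[ℂ] 𝓗)) ((B : 𝓗 →L[ℂ] 𝓗) (φ : 𝓗)))) = 0 → φ = 0 := by
  intro ψ0 W Q φ hφ
  have hψ0 : ψ0 ≠ 0 := by
    intro h
    apply hψs
    rw [show ψs = B ψ0 from (B.apply_symm_apply ψs).symm, h, map_zero]
  rw [show Q = W.orthogonalProjectionOnto from rfl, Submodule.orthogonalProjectionOnto_eq_zero_iff] at hφ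
  have hφ' : (B.symm : 𝓗 →L[ℂ] 𝓗)
      ((H - (E : ℂ) • (1 : 𝓗 →L[ℂ] 𝓗)) ((B : 𝓗 →L[ℂ] 𝓗) (φ : 𝓗))) ∈ (ℂ ∙ ψ0)ᗮᗮ := hφ
  rw [Submodule.orthogonal_orthogonal] at hφ'
  obtain ⟨c, hc⟩ := Submodule.mem_span_singleton.mp hφ'
  set x : 𝓗 := (B : 𝓗 →L[ℂ] 𝓗) (φ : 𝓗) with hx
  have hBc : (H - (E : ℂ) • (1 : 𝓗 →L[ℂ] 𝓗)) x = c • ψs := by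
    have := congrArg B hc
    simpa [ψ0, map_smul] using this.symm
  have hinner : ⟪ψs, (H - (E : ℂ) • (1 : 𝓗 →L[ℂ] 𝓗)) x⟫_ℂ = 0 := by
    have hsym := hH.isSymmetric ψs x
    simp only [ContinuousLinearMap.coe_coe] at hsym
    simp only [sub_apply, smul_apply, one_apply, inner_sub_right, inner_smul_right]
    rw [← hsym, heig, inner_smul_left]
    simp [Complex.conj_ofReal]
  have hc0 : c = 0 := by
    rw [hBc, inner_smul_right] at hinner
    rcases mul_eq_zero.mp hinner with h | h
    · exact h
    · exact absurd (inner_self_eq_zero.mp h) hψs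
  have hx0 : H x = (E : ℂ) • x := by
    have h1 := hBc
    rw [hc0, zero_smul] at h1
    have h2 : H x - (E : ℂ) • x = 0 := by simpa [sub_apply, smul_apply] using h1
    exact sub_eq_zero.mp h2
  obtain ⟨z, hz⟩ := hker x hx0
  have hφz : (φ : 𝓗) = z • ψ0 := by
    have := congrArg B.symm hz
    simpa [hx, ψ0, map_smul] using this
  have horth : ⟪ψ0, (φ : 𝓗)⟫_ℂ = 0 := φ.2 ψ0 (Submodule.mem_span_singleton_self ψ0)
  rw [hφz, inner_smul_right] at horth
  rcases mul_eq_zero.mp horth with h | h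
  · ext
    simp [hφz, h]
  · exact absurd (inner_self_eq_zero.mp h) hψ0
end

section
/- Assume Hψ* = E·ψ* and the spectral-gap condition: there is Λ > 0 such that ‖(H − E)φ‖ ≥ Λ‖φ‖ for every φ ∈ 𝐇 orthogonal to ψ*. Then the operator A‡ : W → W, A‡χ := Q(B*((H − E)((B*)⁻¹χ))), is bounded below: for every χ ∈ W one has Λ·‖χ‖ ≤ ‖B*‖ · ‖Q∘B⁻¹‖ · ‖A‡χ‖, where ‖B*‖ and ‖Q∘B⁻¹‖ denote operator norms on 𝐇. -/
open scoped InnerProductSpace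
open ContinuousLinearMap

/-- In a complex Hilbert space `𝓗`, with `H` bounded self-adjoint, `E ∈ ℝ`,
`B` a continuous linear automorphism with adjoint `B*`, `ψ* ≠ 0`, `ψ₀ := B⁻¹ψ*`,
`W := {ψ₀}^⊥`, `Q` the orthogonal projection onto `W`: assume `Hψ* = E·ψ*` and the
spectral-gap condition `‖(H − E)φ‖ ≥ Λ‖φ‖` (with `Λ > 0`) for every `φ ⊥ ψ*`.  Then the
operator `A‡ : W → W`, `A‡χ := Q(B*((H − E)((B*)⁻¹χ)))`, is bounded below:
`Λ·‖χ‖ ≤ ‖B*‖·‖Q∘B⁻¹‖·‖A‡χ‖` for every `χ ∈ W`. -/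
theorem cc_adjoint_operator_bounded_below
    {𝓗 : Type*} [NormedAddCommGroup 𝓗] [InnerProductSpace ℂ 𝓗] [CompleteSpace 𝓗]
    (H : 𝓗 →L[ℂ] 𝓗) (hH : IsSelfAdjoint H) (E : ℝ)
    (B : 𝓗 ≃L[ℂ] 𝓗) (ψs : 𝓗) (hψs : ψs ≠ 0)
    (heig : H ψs = (E : ℂ) • ψs)
    (Λ : ℝ) (hΛ : 0 < Λ)
    (hgap : ∀ φ : 𝓗, ⟪ψs, φ⟫_ℂ = 0 →
      Λ * ‖φ‖ ≤ ‖(H - (E : ℂ) • (1 : 𝓗 →L[ℂ] 𝓗)) φ‖) :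
    let ψ0 : 𝓗 := B.symm ψs
    let W : Submodule ℂ 𝓗 := (ℂ ∙ ψ0)ᗮ
    let Q : 𝓗 →L[ℂ] W := W.orthogonalProjectionOnto
    let Aadj : W →L[ℂ] W :=
      Q ∘L ((ContinuousLinearMap.adjoint (B : 𝓗 →L[ℂ] 𝓗)) ∘L
        ((H - (E : ℂ) • (1 : 𝓗 →L[ℂ] 𝓗)) ∘L
          ((ContinuousLinearMap.adjoint (B.symm : 𝓗 →L[ℂ] 𝓗)) ∘L W.subtypeL)))
    ∀ χ : W,
      Λ * ‖χ‖ ≤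
        ‖ContinuousLinearMap.adjoint (B : 𝓗 →L[ℂ] 𝓗)‖ *
          ‖Q ∘L (B.symm : 𝓗 →L[ℂ] 𝓗)‖ * ‖Aadj χ‖ := by
  intro ψ0 W Q Aadj χ
  set Bc : 𝓗 →L[ℂ] 𝓗 := (B : 𝓗 →L[ℂ] 𝓗) with hBc
  set Bs : 𝓗 →L[ℂ] 𝓗 := (B.symm : 𝓗 →L[ℂ] 𝓗) with hBs
  set φ : 𝓗 := ContinuousLinearMap.adjoint Bs (χ : 𝓗) with hφ
  set y : 𝓗 := (H - (E : ℂ) • (1 : 𝓗 →L[ℂ] 𝓗)) φ with hy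
  -- ψ0 ⊥ χ
  have hψ0χ : ⟪ψ0, (χ : 𝓗)⟫_ℂ = 0 := by
    exact χ.2 ψ0 (Submodule.mem_span_singleton_self ψ0)
  -- φ ⊥ ψs
  have hφψ : ⟪ψs, φ⟫_ℂ = 0 := by
    rw [hφ, ContinuousLinearMap.adjoint_inner_right]
    simpa [hBs] using hψ0χ
  -- y ⊥ ψs
  have hyψ : ⟪ψs, y⟫_ℂ = 0 := by
    have hHφ : ⟪ψs, H φ⟫_ℂ = (E : ℂ) * ⟪ψs, φ⟫_ℂ := by
      rw [← hH.adjoint_eq, ContinuousLinearMap.adjoint_inner_right, heig,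
        inner_smul_left]
      simp
    rw [hy]
    simp only [ContinuousLinearMap.sub_apply, ContinuousLinearMap.smul_apply,
      ContinuousLinearMap.one_apply, inner_sub_right, inner_smul_right, hHφ, hφψ]
    ring
  -- gap: Λ‖φ‖ ≤ ‖y‖
  have hgapφ : Λ * ‖φ‖ ≤ ‖y‖ := hgap φ hφψ
  -- χ = B* φ
  have hBB : ContinuousLinearMap.adjoint Bc φ = (χ : 𝓗) := by
    rw [hφ, ← ContinuousLinearMap.comp_apply, ← ContinuousLinearMap.adjoint_comp]
    have h1 : Bs ∘L Bc = 1 := by ext z; simp [hBs, hBc]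
    rw [h1]
    have : ContinuousLinearMap.adjoint (1 : 𝓗 →L[ℂ] 𝓗) = 1 := by
      rw [ContinuousLinearMap.one_def, ContinuousLinearMap.adjoint_id]
    rw [this, ContinuousLinearMap.one_apply]
  have hχφ : ‖(χ : 𝓗)‖ ≤ ‖ContinuousLinearMap.adjoint Bc‖ * ‖φ‖ := by
    rw [← hBB]; exact (ContinuousLinearMap.adjoint Bc).le_opNorm φ
  -- u = B* y, the key vector
  set u : 𝓗 := ContinuousLinearMap.adjoint Bc y with hu
  have hAadj : Aadj χ = Q u := rfl
  -- u ⊥ ψ0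
  have huψ0 : ⟪u, ψ0⟫_ℂ = 0 := by
    rw [hu, ContinuousLinearMap.adjoint_inner_left]
    have : Bc ψ0 = ψs := B.apply_symm_apply ψs
    rw [this, ← inner_conj_symm, hyψ, map_zero]
  -- ⟪u, Bs y⟫ = ‖y‖²
  have hkey : ⟪u, Bs y⟫_ℂ = (‖y‖ : ℂ) ^ 2 := by
    rw [hu, ContinuousLinearMap.adjoint_inner_left]
    have : Bc (Bs y) = y := by simp [hBc, hBs]
    rw [this, inner_self_eq_norm_sq_to_K]
    norm_cast
  -- replace by projections
  have hsplit : ⟪u, Bs y⟫_ℂ = ⟪(Q u : 𝓗), (Q (Bs y) : 𝓗)⟫_ℂ := by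
    have h1 : ⟪u, Bs y - (Q (Bs y) : 𝓗)⟫_ℂ = 0 := by
      have hmem : Bs y - (Q (Bs y) : 𝓗) ∈ Wᗮ :=
        Submodule.sub_starProjection_mem_orthogonal (K := W) (Bs y)
      have hWo : Wᗮ = (ℂ ∙ ψ0) := Submodule.orthogonal_orthogonal (ℂ ∙ ψ0)
      rw [hWo] at hmem
      obtain ⟨c, hc⟩ := Submodule.mem_span_singleton.mp hmem
      rw [← hc, inner_smul_right, huψ0, mul_zero]
    have h2 : ⟪u - (Q u : 𝓗), (Q (Bs y) : 𝓗)⟫_ℂ = 0 := by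
      have hmem : u - (Q u : 𝓗) ∈ Wᗮ :=
        Submodule.sub_starProjection_mem_orthogonal (K := W) u
      rw [← inner_conj_symm, hmem (Q (Bs y) : 𝓗) (Q (Bs y)).2, map_zero]
    have e1 : ⟪u, Bs y⟫_ℂ = ⟪u, (Q (Bs y) : 𝓗)⟫_ℂ := by
      have := inner_sub_right (𝕜 := ℂ) u (Bs y) (Q (Bs y) : 𝓗)
      rw [h1] at this
      linear_combination -this
    have e2 : ⟪u, (Q (Bs y) : 𝓗)⟫_ℂ = ⟪(Q u : 𝓗), (Q (Bs y) : 𝓗)⟫_ℂ := by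
      have := inner_sub_left (𝕜 := ℂ) u (Q u : 𝓗) (Q (Bs y) : 𝓗)
      rw [h2] at this
      linear_combination -this
    rw [e1, e2]
  -- norm bound: ‖y‖² ≤ ‖Q u‖ * (‖Q ∘L Bs‖ * ‖y‖)
  have hQBs : ‖(Q (Bs y) : 𝓗)‖ ≤ ‖Q ∘L Bs‖ * ‖y‖ := by
    have : (Q (Bs y) : 𝓗) = ((Q ∘L Bs) y : 𝓗) := rfl
    rw [this]
    calc ‖((Q ∘L Bs) y : 𝓗)‖ = ‖(Q ∘L Bs) y‖ := rfl
      _ ≤ ‖Q ∘L Bs‖ * ‖y‖ := (Q ∘L Bs).le_opNorm y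
  have hnormsq : ‖y‖ ^ 2 ≤ ‖(Q u : 𝓗)‖ * (‖Q ∘L Bs‖ * ‖y‖) := by
    have habs : ‖y‖ ^ 2 = ‖⟪(Q u : 𝓗), (Q (Bs y) : 𝓗)⟫_ℂ‖ := by
      rw [← hsplit, hkey]
      simp [abs_of_nonneg (norm_nonneg y), sq_abs]
    rw [habs]
    calc ‖⟪(Q u : 𝓗), (Q (Bs y) : 𝓗)⟫_ℂ‖
        ≤ ‖(Q u : 𝓗)‖ * ‖(Q (Bs y) : 𝓗)‖ := norm_inner_le_norm _ _
      _ ≤ ‖(Q u : 𝓗)‖ * (‖Q ∘L Bs‖ * ‖y‖) := by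
          exact mul_le_mul_of_nonneg_left hQBs (norm_nonneg _)
    -- done
  have hynorm : ‖y‖ ≤ ‖(Q u : 𝓗)‖ * ‖Q ∘L Bs‖ := by
    rcases eq_or_lt_of_le (norm_nonneg y) with h0 | h0
    · rw [← h0]
      positivity
    · have := hnormsq
      rw [sq] at this
      nlinarith
  -- final chain
  have hQu : ‖(Q u : 𝓗)‖ = ‖Aadj χ‖ := by rw [hAadj]; simp
  have hχnorm : ‖χ‖ = ‖(χ : 𝓗)‖ := rfl
  calc Λ * ‖χ‖ = Λ * ‖(χ : 𝓗)‖ := by rw [hχnorm]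
    _ ≤ Λ * (‖ContinuousLinearMap.adjoint Bc‖ * ‖φ‖) :=
        mul_le_mul_of_nonneg_left hχφ hΛ.le
    _ = ‖ContinuousLinearMap.adjoint Bc‖ * (Λ * ‖φ‖) := by ring
    _ ≤ ‖ContinuousLinearMap.adjoint Bc‖ * ‖y‖ :=
        mul_le_mul_of_nonneg_left hgapφ (norm_nonneg _)
    _ ≤ ‖ContinuousLinearMap.adjoint Bc‖ * (‖(Q u : 𝓗)‖ * ‖Q ∘L Bs‖) :=
        mul_le_mul_of_nonneg_left hynorm (norm_nonneg _)
    _ = ‖ContinuousLinearMap.adjoint Bc‖ * ‖Q ∘L Bs‖ * ‖Aadj χ‖ := by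
        rw [hQu]; ring
end

section
/- Assume Hψ* = E·ψ* and the spectral-gap condition: there is Λ > 0 such that ‖(H − E)φ‖ ≥ Λ‖φ‖ for every φ ∈ 𝐇 orthogonal to ψ*. Then A : W → W is bijective, and for every φ ∈ W one has Λ·‖φ‖ ≤ ‖B*‖ · ‖Q∘B⁻¹‖ · ‖Aφ‖; in particular A is a continuous linear isomorphism of W whose inverse has operator norm at most ‖B*‖·‖Q∘B⁻¹‖/Λ. -/
open scoped InnerProductSpace
open ContinuousLinearMap

theorem sub_orthogonalProjection_mem_orthogonal {𝕜 E : Type*} [RCLike 𝕜]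
    [NormedAddCommGroup E] [InnerProductSpace 𝕜 E] {K : Submodule 𝕜 E}
    [K.HasOrthogonalProjection] (v : E) :
    v - (Submodule.orthogonalProjection K v : E) ∈ Kᗮ :=
  K.sub_starProjection_mem_orthogonal v

set_option maxHeartbeats 1600000 in
/-- In a complex Hilbert space `𝓗`, with `H` bounded self-adjoint, `E ∈ ℝ`,
`B` a continuous linear automorphism with adjoint `B*`, `ψ* ≠ 0`, `ψ₀ := B⁻¹ψ*`,
`W := {ψ₀}^⊥`, `Q` the orthogonal projection onto `W`, and `Aφ := Q(B⁻¹((H − E)(Bφ)))`: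
assume `Hψ* = E·ψ*` and the spectral-gap condition `‖(H − E)φ‖ ≥ Λ‖φ‖` (with `Λ > 0`) for
every `φ ⊥ ψ*`.  Then `A : W → W` is bijective, `Λ·‖φ‖ ≤ ‖B*‖·‖Q∘B⁻¹‖·‖Aφ‖` for every
`φ ∈ W`, and `A` is a continuous linear isomorphism of `W` whose inverse has operator norm at
most `‖B*‖·‖Q∘B⁻¹‖/Λ`. -/
theorem cc_induced_operator_isomorphism
    {𝓗 : Type*} [NormedAddCommGroup 𝓗] [InnerProductSpace ℂ 𝓗] [CompleteSpace 𝓗]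
    (H : 𝓗 →L[ℂ] 𝓗) (hH : IsSelfAdjoint H) (E : ℝ)
    (B : 𝓗 ≃L[ℂ] 𝓗) (ψs : 𝓗) (hψs : ψs ≠ 0)
    (heig : H ψs = (E : ℂ) • ψs)
    (Λ : ℝ) (hΛ : 0 < Λ)
    (hgap : ∀ φ : 𝓗, ⟪ψs, φ⟫_ℂ = 0 →
      Λ * ‖φ‖ ≤ ‖(H - (E : ℂ) • (1 : 𝓗 →L[ℂ] 𝓗)) φ‖) :
    let ψ0 : 𝓗 := B.symm ψs
    let W : Submodule ℂ 𝓗 := (ℂ ∙ ψ0)ᗮ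
    let Q : 𝓗 →L[ℂ] W := Submodule.orthogonalProjection W
    let A : W →L[ℂ] W :=
      Q ∘L ((B.symm : 𝓗 →L[ℂ] 𝓗) ∘L
        ((H - (E : ℂ) • (1 : 𝓗 →L[ℂ] 𝓗)) ∘L ((B : 𝓗 →L[ℂ] 𝓗) ∘L W.subtypeL)))
    Function.Bijective A ∧
      (∀ φ : W,
        Λ * ‖φ‖ ≤
          ‖ContinuousLinearMap.adjoint (B : 𝓗 →L[ℂ] 𝓗)‖ *
            ‖Q ∘L (B.symm : 𝓗 →L[ℂ] 𝓗)‖ * ‖A φ‖) ∧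
      ∃ e : W ≃L[ℂ] W, (∀ φ : W, e φ = A φ) ∧
        ‖(e.symm : W →L[ℂ] W)‖ ≤
          ‖ContinuousLinearMap.adjoint (B : 𝓗 →L[ℂ] 𝓗)‖ *
            ‖Q ∘L (B.symm : 𝓗 →L[ℂ] 𝓗)‖ / Λ := by
  intro ψ0 W Q A
  set K : 𝓗 →L[ℂ] 𝓗 := H - (E : ℂ) • (1 : 𝓗 →L[ℂ] 𝓗) with hKdef
  set Θ : ℝ := ‖ContinuousLinearMap.adjoint (B : 𝓗 →L[ℂ] 𝓗)‖ *
      ‖Q ∘L (B.symm : 𝓗 →L[ℂ] 𝓗)‖ with hΘdef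
  have hΘ0 : 0 ≤ Θ := by positivity
  have hψ0 : ψ0 ≠ 0 := by
    simp only [ψ0, ne_eq, ContinuousLinearEquiv.map_eq_zero_iff]
    exact hψs
  have hBψ0 : (B : 𝓗 →L[ℂ] 𝓗) ψ0 = ψs := B.apply_symm_apply ψs
  have hBsψs : (B.symm : 𝓗 →L[ℂ] 𝓗) ψs = ψ0 := rfl
  have hK0 : K ψs = 0 := by
    simp [hKdef, ContinuousLinearMap.sub_apply, heig]
  have hKadj : ContinuousLinearMap.adjoint K = K := by
    rw [hKdef, map_sub, hH.adjoint_eq, map_smulₛₗ, ContinuousLinearMap.one_def,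
      adjoint_id, Complex.conj_ofReal]
  have horth : ∀ x : 𝓗, ⟪ψs, K x⟫_ℂ = 0 := by
    intro x
    have h := ContinuousLinearMap.adjoint_inner_left K x ψs
    rw [hKadj, hK0] at h
    simpa using h.symm
  have hAφ : ∀ φ : W, (A φ : 𝓗) =
      ((Q ((B.symm : 𝓗 →L[ℂ] 𝓗) (K ((B : 𝓗 →L[ℂ] 𝓗) (φ : 𝓗)))) : W) : 𝓗) :=
    fun φ => rfl
  have hWo : Wᗮ = ℂ ∙ ψ0 := Submodule.orthogonal_orthogonal _
  have hQψ0 : Q ψ0 = 0 :=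
    Submodule.orthogonalProjectionOnto_apply_of_mem_orthogonal
      ((ℂ ∙ ψ0).le_orthogonal_orthogonal (Submodule.mem_span_singleton_self ψ0))
  -- the key inequality
  have key : ∀ φ : W, Λ * ‖φ‖ ≤ Θ * ‖A φ‖ := by
    intro φ
    set x : 𝓗 := (B : 𝓗 →L[ℂ] 𝓗) (φ : 𝓗) with hx
    set v : 𝓗 := K x with hv
    set w : 𝓗 := x - Submodule.orthogonalProjection (ℂ ∙ ψs) x with hw
    have hwperp : ⟪ψs, w⟫_ℂ = 0 :=
      Submodule.mem_orthogonal_singleton_iff_inner_right.mp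
        (sub_orthogonalProjection_mem_orthogonal (K := ℂ ∙ ψs) x)
    obtain ⟨c, hc⟩ := Submodule.mem_span_singleton.mp
      (Submodule.orthogonalProjection (ℂ ∙ ψs) x).2
    have hKw : K w = v := by
      have h0 : K ((Submodule.orthogonalProjection (ℂ ∙ ψs) x : 𝓗)) = 0 := by
        rw [← hc, map_smul, hK0, smul_zero]
      simp [hw, map_sub, h0, hv, -Submodule.coe_orthogonalProjectionOnto_apply]
    have hφw : (φ : W) = (Q ∘L (B.symm : 𝓗 →L[ℂ] 𝓗)) w := by
      have h1 : (B.symm : 𝓗 →L[ℂ] 𝓗) x = (φ : 𝓗) := B.symm_apply_apply _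
      have h2 : (B.symm : 𝓗 →L[ℂ] 𝓗) ((Submodule.orthogonalProjection (ℂ ∙ ψs) x : 𝓗))
          = c • ψ0 := by rw [← hc, map_smul, hBsψs]
      have h3 : Q (φ : 𝓗) = φ := Submodule.orthogonalProjection_mem_subspace_eq_self φ
      simp [ContinuousLinearMap.comp_apply, hw, map_sub, h1, h2, map_smul,
        hQψ0, h3, smul_zero, sub_zero, -Submodule.coe_orthogonalProjectionOnto_apply]
    have h2' : ‖φ‖ ≤ ‖Q ∘L (B.symm : 𝓗 →L[ℂ] 𝓗)‖ * ‖w‖ := by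
      rw [hφw]; exact (Q ∘L (B.symm : 𝓗 →L[ℂ] 𝓗)).le_opNorm w
    have h3' : Λ * ‖w‖ ≤ ‖v‖ := by rw [← hKw]; exact hgap w hwperp
    have hvA : ‖v‖ ≤ ‖ContinuousLinearMap.adjoint (B : 𝓗 →L[ℂ] 𝓗)‖ * ‖A φ‖ := by
      have hvperp : ⟪v, ψs⟫_ℂ = 0 := by
        rw [← inner_conj_symm, hv, horth x]; simp
      obtain ⟨d, hd⟩ := Submodule.mem_span_singleton.mp
        (hWo ▸ sub_orthogonalProjection_mem_orthogonal (K := W)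
          ((B.symm : 𝓗 →L[ℂ] 𝓗) v))
      have hdecomp : (B.symm : 𝓗 →L[ℂ] 𝓗) v
          = ((Q ((B.symm : 𝓗 →L[ℂ] 𝓗) v) : W) : 𝓗) + d • ψ0 := by
        rw [hd]; abel
      have hAcoe : ((Q ((B.symm : 𝓗 →L[ℂ] 𝓗) v) : W) : 𝓗) = (A φ : 𝓗) :=
        (hAφ φ).symm
      have hBu : (B : 𝓗 →L[ℂ] 𝓗) ((Q ((B.symm : 𝓗 →L[ℂ] 𝓗) v) : W) : 𝓗)
          = v - d • ψs := by
        have hu : ((Q ((B.symm : 𝓗 →L[ℂ] 𝓗) v) : W) : 𝓗)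
            = (B.symm : 𝓗 →L[ℂ] 𝓗) v - d • ψ0 := by rw [hd]; abel
        rw [hu, map_sub, map_smul, hBψ0]
        congr 1
        exact B.apply_symm_apply v
      have hinner : ⟪v, v⟫_ℂ
          = ⟪ContinuousLinearMap.adjoint (B : 𝓗 →L[ℂ] 𝓗) v, (A φ : 𝓗)⟫_ℂ := by
        rw [← hAcoe, ContinuousLinearMap.adjoint_inner_left, hBu, inner_sub_right,
          inner_smul_right, hvperp, mul_zero, sub_zero]
      have hsq : ‖v‖ * ‖v‖
          ≤ (‖ContinuousLinearMap.adjoint (B : 𝓗 →L[ℂ] 𝓗)‖ * ‖A φ‖) * ‖v‖ := by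
        have e1 : ‖v‖ * ‖v‖ = RCLike.re ⟪v, v⟫_ℂ := (inner_self_eq_norm_mul_norm v).symm
        rw [e1, hinner]
        calc RCLike.re ⟪ContinuousLinearMap.adjoint (B : 𝓗 →L[ℂ] 𝓗) v, (A φ : 𝓗)⟫_ℂ
            ≤ ‖⟪ContinuousLinearMap.adjoint (B : 𝓗 →L[ℂ] 𝓗) v, (A φ : 𝓗)⟫_ℂ‖ :=
              RCLike.re_le_norm _
          _ ≤ ‖ContinuousLinearMap.adjoint (B : 𝓗 →L[ℂ] 𝓗) v‖ * ‖(A φ : 𝓗)‖ :=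
              norm_inner_le_norm _ _
          _ ≤ (‖ContinuousLinearMap.adjoint (B : 𝓗 →L[ℂ] 𝓗)‖ * ‖v‖) * ‖(A φ : 𝓗)‖ := by
              gcongr
              exact (ContinuousLinearMap.adjoint (B : 𝓗 →L[ℂ] 𝓗)).le_opNorm v
          _ = (‖ContinuousLinearMap.adjoint (B : 𝓗 →L[ℂ] 𝓗)‖ * ‖A φ‖) * ‖v‖ := by
              rw [Submodule.norm_coe]; ring
      rcases eq_or_lt_of_le (norm_nonneg v) with h0 | h0
      · rw [← h0]; positivity
      · exact le_of_mul_le_mul_right hsq h0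
    calc Λ * ‖φ‖ ≤ Λ * (‖Q ∘L (B.symm : 𝓗 →L[ℂ] 𝓗)‖ * ‖w‖) := by
          exact mul_le_mul_of_nonneg_left h2' hΛ.le
      _ = ‖Q ∘L (B.symm : 𝓗 →L[ℂ] 𝓗)‖ * (Λ * ‖w‖) := by ring
      _ ≤ ‖Q ∘L (B.symm : 𝓗 →L[ℂ] 𝓗)‖ * ‖v‖ := by
          exact mul_le_mul_of_nonneg_left h3' (ContinuousLinearMap.opNorm_nonneg _)
      _ ≤ ‖Q ∘L (B.symm : 𝓗 →L[ℂ] 𝓗)‖ *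
          (‖ContinuousLinearMap.adjoint (B : 𝓗 →L[ℂ] 𝓗)‖ * ‖A φ‖) := by
          exact mul_le_mul_of_nonneg_left hvA (ContinuousLinearMap.opNorm_nonneg _)
      _ = Θ * ‖A φ‖ := by rw [hΘdef]; ring
  -- injectivity
  have hinjf : Function.Injective A := by
    intro a b hab
    have hk := key (a - b)
    rw [map_sub, hab, sub_self, norm_zero, mul_zero] at hk
    have h0 : ‖a - b‖ ≤ 0 := by nlinarith [norm_nonneg (a - b)]
    have := le_antisymm h0 (norm_nonneg _)
    rwa [norm_eq_zero, sub_eq_zero] at this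
  have hker : LinearMap.ker (A : W →ₗ[ℂ] W) = ⊥ := LinearMap.ker_eq_bot.mpr hinjf
  -- antilipschitz / closed range
  have hbound : ∀ φ : W, ‖φ‖ ≤ (Θ / Λ) * ‖A φ‖ := by
    intro φ
    rw [div_mul_eq_mul_div, le_div_iff₀ hΛ, mul_comm]
    exact key φ
  have hanti : AntilipschitzWith ((Θ / Λ).toNNReal) A :=
    A.antilipschitz_of_bound (fun φ => by
      rw [Real.coe_toNNReal _ (div_nonneg hΘ0 hΛ.le)]; exact hbound φ)
  have hclosed : IsClosed ((LinearMap.range (A : W →ₗ[ℂ] W) : Submodule ℂ W) : Set W) := by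
    have h := hanti.isClosed_range A.uniformContinuous
    simpa [LinearMap.coe_range] using h
  haveI : CompleteSpace (LinearMap.range (A : W →ₗ[ℂ] W) : Submodule ℂ W) := hclosed.completeSpace_coe
  -- adjoint composition identities
  have hBB1 : ∀ z : 𝓗, ContinuousLinearMap.adjoint (B.symm : 𝓗 →L[ℂ] 𝓗)
      (ContinuousLinearMap.adjoint (B : 𝓗 →L[ℂ] 𝓗) z) = z := by
    intro z; rw [← ContinuousLinearMap.comp_apply, ← adjoint_comp]; simp [adjoint_id]
  have hBB2 : ∀ z : 𝓗, ContinuousLinearMap.adjoint (B : 𝓗 →L[ℂ] 𝓗)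
      (ContinuousLinearMap.adjoint (B.symm : 𝓗 →L[ℂ] 𝓗) z) = z := by
    intro z; rw [← ContinuousLinearMap.comp_apply, ← adjoint_comp]; simp [adjoint_id]
  -- surjectivity
  have hrange : LinearMap.range (A : W →ₗ[ℂ] W) = ⊤ := by
    rw [← Submodule.orthogonal_eq_bot_iff, Submodule.eq_bot_iff]
    intro ψ hψmem
    set χ : 𝓗 := ContinuousLinearMap.adjoint (B.symm : 𝓗 →L[ℂ] 𝓗) (ψ : 𝓗) with hχ
    have hy : ∀ y : 𝓗, ⟪((Q y : W) : 𝓗), (ψ : 𝓗)⟫_ℂ = ⟪y, (ψ : 𝓗)⟫_ℂ := by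
      intro y
      have hsub := sub_orthogonalProjection_mem_orthogonal (K := W) y
      have h0 : ⟪y - ((Q y : W) : 𝓗), (ψ : 𝓗)⟫_ℂ = 0 := by
        rw [← inner_conj_symm, (W.mem_orthogonal _).1 hsub (ψ : 𝓗) ψ.2]
        simp
      rw [inner_sub_left, sub_eq_zero] at h0
      exact h0.symm
    have hg : ∀ φ : W, ⟪(φ : 𝓗),
        ContinuousLinearMap.adjoint (B : 𝓗 →L[ℂ] 𝓗) (K χ)⟫_ℂ = 0 := by
      intro φ
      have h0 : ⟪((A φ : W) : 𝓗), (ψ : 𝓗)⟫_ℂ = 0 := by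
        have hm := (Submodule.mem_orthogonal _ _).1 hψmem (A φ) ⟨φ, rfl⟩
        simpa [Submodule.coe_inner] using hm
      rw [hAφ φ, hy] at h0
      rw [ContinuousLinearMap.adjoint_inner_right]
      calc ⟪(B : 𝓗 →L[ℂ] 𝓗) (φ : 𝓗), K χ⟫_ℂ
          = ⟪(B : 𝓗 →L[ℂ] 𝓗) (φ : 𝓗), ContinuousLinearMap.adjoint K χ⟫_ℂ := by
            rw [hKadj]
        _ = ⟪K ((B : 𝓗 →L[ℂ] 𝓗) (φ : 𝓗)), χ⟫_ℂ :=
            ContinuousLinearMap.adjoint_inner_right _ _ _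
        _ = ⟪(B.symm : 𝓗 →L[ℂ] 𝓗) (K ((B : 𝓗 →L[ℂ] 𝓗) (φ : 𝓗))), (ψ : 𝓗)⟫_ℂ := by
            rw [hχ, ContinuousLinearMap.adjoint_inner_right]
        _ = 0 := h0
    have hgmem : ContinuousLinearMap.adjoint (B : 𝓗 →L[ℂ] 𝓗) (K χ) ∈ Wᗮ := by
      rw [Submodule.mem_orthogonal]
      intro u hu
      exact hg ⟨u, hu⟩
    obtain ⟨c, hc⟩ := Submodule.mem_span_singleton.mp (hWo ▸ hgmem)
    have hKχ : K χ = c • ContinuousLinearMap.adjoint (B.symm : 𝓗 →L[ℂ] 𝓗) ψ0 := by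
      have h1 := hBB1 (K χ)
      rw [← hc] at h1
      rw [← h1, map_smul]
    have hc0 : c = 0 := by
      have h0 := horth χ
      rw [hKχ, inner_smul_right] at h0
      have h1 : ⟪ψs, ContinuousLinearMap.adjoint (B.symm : 𝓗 →L[ℂ] 𝓗) ψ0⟫_ℂ
          = ⟪ψ0, ψ0⟫_ℂ := by
        rw [ContinuousLinearMap.adjoint_inner_right, hBsψs]
      rw [h1] at h0
      have h2 : ⟪ψ0, ψ0⟫_ℂ ≠ 0 := by
        rw [inner_self_ne_zero]; exact hψ0
      exact (mul_eq_zero.mp h0).resolve_right h2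
    have hKχ0 : K χ = 0 := by rw [hKχ, hc0, zero_smul]
    have hχperp : ⟪ψs, χ⟫_ℂ = 0 := by
      rw [hχ, ContinuousLinearMap.adjoint_inner_right, hBsψs]
      exact Submodule.mem_orthogonal_singleton_iff_inner_right.mp ψ.2
    have hχ0 : χ = 0 := by
      have := hgap χ hχperp
      rw [hKχ0, norm_zero] at this
      have h0 : ‖χ‖ ≤ 0 := by nlinarith [norm_nonneg χ]
      exact norm_le_zero_iff.mp h0
    have hψ0' : (ψ : 𝓗) = 0 := by
      have := hBB2 (ψ : 𝓗)
      rw [← hχ] at this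
      rw [← this, hχ0, map_zero]
    exact Submodule.coe_eq_zero.mp hψ0'
  have hsurjf : Function.Surjective A := LinearMap.range_eq_top.mp hrange
  haveI : CompleteSpace W := (Submodule.isClosed_orthogonal _).completeSpace_coe
  refine ⟨⟨hinjf, hsurjf⟩, fun φ => by
    have := key φ; rw [hΘdef] at this; exact this, ?_⟩
  refine ⟨ContinuousLinearEquiv.ofBijective A hker hrange, fun φ => rfl, ?_⟩
  refine ContinuousLinearMap.opNorm_le_bound _ (div_nonneg hΘ0 hΛ.le) (fun ψ => ?_)
  have hAee : A ((ContinuousLinearEquiv.ofBijective A hker hrange).symm ψ) = ψ := by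
    have := (ContinuousLinearEquiv.ofBijective A hker hrange).apply_symm_apply ψ
    exact this
  have hk := key ((ContinuousLinearEquiv.ofBijective A hker hrange).symm ψ)
  rw [hAee] at hk
  rw [div_mul_eq_mul_div, le_div_iff₀ hΛ, mul_comm]
  simpa using hk
end

section
/- Set R := min{δ, 1/(κL), 2α/L}. Then for every s in the open ball of radius R centred at t*: (1/(2α))·‖f(s)‖ ≤ ‖t* − s‖ ≤ 2κ·‖f(s)‖. Moreover, f is injective on this open ball; in particular t* is the unique zero of f in the open ball of radius R centred at t*. -/
open Metric Set

private lemma taylor_half_cc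
    {X Y : Type*} [NormedAddCommGroup X] [NormedSpace ℝ X]
    [NormedAddCommGroup Y] [NormedSpace ℝ Y]
    (f : X → Y) (tstar : X) (δ : ℝ) (Df : X → (X →L[ℝ] Y))
    (hdiff : ∀ s ∈ Metric.closedBall tstar δ, HasFDerivAt f (Df s) s)
    (L : ℝ)
    (hlip : ∀ s₁ ∈ Metric.closedBall tstar δ, ∀ s₂ ∈ Metric.closedBall tstar δ,
      ‖Df s₁ - Df s₂‖ ≤ L * ‖s₁ - s₂‖)
    (x y : X) (hx : x ∈ Metric.closedBall tstar δ) (hy : y ∈ Metric.closedBall tstar δ) :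
    ‖f y - f x - Df x (y - x)‖ ≤ L / 2 * ‖y - x‖ ^ 2 := by
  set v := y - x with hv
  have hmem : ∀ t ∈ Icc (0:ℝ) 1, x + t • v ∈ Metric.closedBall tstar δ := fun t ht =>
    (convex_closedBall tstar δ).add_smul_sub_mem hx hy ht
  set G : ℝ → Y := fun t => f (x + t • v) - f x - t • (Df x v) with hG
  set G' : ℝ → Y := fun t => Df (x + t • v) v - Df x v with hG'
  have hGd : ∀ t ∈ Icc (0:ℝ) 1, HasDerivAt G (G' t) t := by
    intro t ht
    have h1 : HasDerivAt (fun t : ℝ => x + t • v) v t := by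
      simpa using ((hasDerivAt_id t).smul_const v).const_add x
    have h2 : HasDerivAt (fun t => f (x + t • v)) (Df (x + t • v) v) t :=
      (hdiff _ (hmem t ht)).comp_hasDerivAt t h1
    have h3 : HasDerivAt (fun t : ℝ => t • (Df x v)) (Df x v) t := by
      simpa using (hasDerivAt_id t).smul_const (Df x v)
    exact (h2.sub_const (f x)).sub h3
  set B : ℝ → ℝ := fun t => L / 2 * ‖v‖ ^ 2 * t ^ 2 with hB
  set B' : ℝ → ℝ := fun t => L * ‖v‖ ^ 2 * t with hB'
  have hBd : ∀ t : ℝ, HasDerivAt B (B' t) t := by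
    intro t
    have := (hasDerivAt_pow 2 t).const_mul (L / 2 * ‖v‖ ^ 2)
    refine this.congr_deriv ?_
    simp [B']; ring
  have key : ∀ t ∈ Icc (0:ℝ) 1, ‖G t‖ ≤ B t := by
    refine image_norm_le_of_norm_deriv_right_le_deriv_boundary
      (fun t ht => (hGd t ht).continuousAt.continuousWithinAt)
      (fun t ht => (hGd t (Ico_subset_Icc_self ht)).hasDerivWithinAt) ?_ hBd ?_
    · simp [G, B]
    · intro t ht
      have hb : ‖Df (x + t • v) - Df x‖ ≤ L * (t * ‖v‖) := by
        have := hlip _ (hmem t ⟨ht.1, ht.2.le⟩) _ hx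
        simpa [norm_smul, abs_of_nonneg ht.1] using this
      calc ‖G' t‖ ≤ ‖Df (x + t • v) - Df x‖ * ‖v‖ := by
            simpa [G'] using (Df (x + t • v) - Df x).le_opNorm v
        _ ≤ L * (t * ‖v‖) * ‖v‖ := mul_le_mul_of_nonneg_right hb (norm_nonneg v)
        _ = B' t := by simp [B']; ring
  have := key 1 ⟨zero_le_one, le_refl 1⟩
  have hxy : x + v = y := by simp [hv]
  simpa [G, B, hxy] using this

set_option maxHeartbeats 1000000 in
/-- Let `X`, `Y` be real Banach spaces, `f : X → Y`, and `t*` a zero of `f`.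
Suppose `f` is Fréchet differentiable on the closed ball of radius `δ > 0` about `t*`, with
derivative `Df` that is `L`-Lipschitz there (`L > 0`), and `Df(t*)` is a continuous linear
bijection with continuous inverse, with `‖Df(t*)‖ ≤ α` and `‖Df(t*)⁻¹‖ ≤ κ` (`α, κ > 0`).
Set `R := min{δ, 1/(κL), 2α/L}`.  Then for every `s` in the open ball of radius `R` about
`t*` one has `(1/(2α))·‖f(s)‖ ≤ ‖t* − s‖ ≤ 2κ·‖f(s)‖`; moreover `f` is injective on this
ball, so in particular `t*` is the unique zero of `f` there. -/
theorem cc_local_wellposedness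
    {X Y : Type*} [NormedAddCommGroup X] [NormedSpace ℝ X] [CompleteSpace X]
    [NormedAddCommGroup Y] [NormedSpace ℝ Y] [CompleteSpace Y]
    (f : X → Y) (tstar : X) (hzero : f tstar = 0)
    (δ : ℝ) (hδ : 0 < δ) (Df : X → (X →L[ℝ] Y))
    (hdiff : ∀ s ∈ Metric.closedBall tstar δ, HasFDerivAt f (Df s) s)
    (L : ℝ) (hL : 0 < L)
    (hlip : ∀ s₁ ∈ Metric.closedBall tstar δ, ∀ s₂ ∈ Metric.closedBall tstar δ,
      ‖Df s₁ - Df s₂‖ ≤ L * ‖s₁ - s₂‖)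
    (e : X ≃L[ℝ] Y) (he : (e : X →L[ℝ] Y) = Df tstar)
    (α κ : ℝ) (hα : 0 < α) (hκ : 0 < κ)
    (hnorm : ‖Df tstar‖ ≤ α) (hinv : ‖(e.symm : Y →L[ℝ] X)‖ ≤ κ) :
    ∀ s ∈ Metric.ball tstar (min δ (min (1 / (κ * L)) (2 * α / L))),
      ((1 / (2 * α)) * ‖f s‖ ≤ ‖tstar - s‖ ∧ ‖tstar - s‖ ≤ 2 * κ * ‖f s‖) ∧
      (∀ s' ∈ Metric.ball tstar (min δ (min (1 / (κ * L)) (2 * α / L))),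
        f s = f s' → s = s') ∧
      (f s = 0 → s = tstar) := by
  set R : ℝ := min δ (min (1 / (κ * L)) (2 * α / L)) with hR
  have hRδ : R ≤ δ := min_le_left _ _
  have hR1 : R ≤ 1 / (κ * L) := le_trans (min_le_right _ _) (min_le_left _ _)
  have hR2 : R ≤ 2 * α / L := le_trans (min_le_right _ _) (min_le_right _ _)
  have hRpos : 0 < R := by
    apply lt_min hδ
    apply lt_min
    · positivity
    · positivity
  -- lower norm bound for Df tstar
  have hlow : ∀ x : X, ‖x‖ ≤ κ * ‖Df tstar x‖ := by
    intro x
    calc ‖x‖ = ‖e.symm (Df tstar x)‖ := by rw [← he]; simp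
      _ ≤ ‖(e.symm : Y →L[ℝ] X)‖ * ‖Df tstar x‖ := (e.symm : Y →L[ℝ] X).le_opNorm _
      _ ≤ κ * ‖Df tstar x‖ :=
          mul_le_mul_of_nonneg_right hinv (norm_nonneg _)
  -- injectivity on the ball
  have hinj : ∀ s ∈ Metric.ball tstar R, ∀ s' ∈ Metric.ball tstar R, f s = f s' → s = s' := by
    intro s hs s' hs' hfe
    set ρ : ℝ := max (dist s tstar) (dist s' tstar) with hρ
    have hρR : ρ < R := max_lt (mem_ball.mp hs) (mem_ball.mp hs')
    have hρ0 : 0 ≤ ρ := le_max_of_le_left dist_nonneg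
    have hsub : Metric.closedBall tstar ρ ⊆ Metric.closedBall tstar δ :=
      Metric.closedBall_subset_closedBall (le_trans hρR.le hRδ)
    have hsm : s ∈ Metric.closedBall tstar ρ := mem_closedBall.mpr (le_max_left _ _)
    have hsm' : s' ∈ Metric.closedBall tstar ρ := mem_closedBall.mpr (le_max_right _ _)
    have hmv : ‖f s - f s' - Df tstar (s - s')‖ ≤ (L * ρ) * ‖s - s'‖ := by
      refine (convex_closedBall tstar ρ).norm_image_sub_le_of_norm_hasFDerivWithin_le'
        (f' := Df) (fun x hx => (hdiff x (hsub hx)).hasFDerivWithinAt) ?_ hsm' hsm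
      intro x hx
      have := hlip x (hsub hx) tstar (Metric.mem_closedBall_self hδ.le)
      refine this.trans ?_
      have : ‖x - tstar‖ ≤ ρ := by
        rw [← dist_eq_norm]; exact mem_closedBall.mp hx
      exact mul_le_mul_of_nonneg_left this hL.le
    rw [hfe, sub_self, zero_sub, norm_neg] at hmv
    have h1 : ‖s - s'‖ ≤ κ * ((L * ρ) * ‖s - s'‖) :=
      le_trans (hlow (s - s')) (mul_le_mul_of_nonneg_left hmv hκ.le)
    have hfac : κ * (L * ρ) < 1 := by
      have : ρ < 1 / (κ * L) := lt_of_lt_of_le hρR hR1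
      have h2 : (κ * L) * ρ < (κ * L) * (1 / (κ * L)) :=
        mul_lt_mul_of_pos_left this (by positivity)
      rw [mul_one_div_cancel (by positivity : (κ * L) ≠ 0)] at h2
      linarith [h2]
    have : (1 - κ * (L * ρ)) * ‖s - s'‖ ≤ 0 := by nlinarith [norm_nonneg (s - s')]
    have hns : ‖s - s'‖ ≤ 0 := by nlinarith [norm_nonneg (s - s')]
    have : s - s' = 0 := norm_le_zero_iff.mp hns
    exact sub_eq_zero.mp this
  intro s hs
  have hsδ : s ∈ Metric.closedBall tstar δ :=
    Metric.closedBall_subset_closedBall hRδ (Metric.ball_subset_closedBall hs)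
  have htδ : tstar ∈ Metric.closedBall tstar δ := Metric.mem_closedBall_self hδ.le
  set r : ℝ := ‖s - tstar‖ with hr
  have hrR : r < R := by rw [hr, ← dist_eq_norm]; exact mem_ball.mp hs
  have hr0 : 0 ≤ r := norm_nonneg _
  -- Taylor estimate at tstar
  have htay : ‖f s - Df tstar (s - tstar)‖ ≤ L / 2 * r ^ 2 := by
    have := taylor_half_cc f tstar δ Df hdiff L hlip tstar s htδ hsδ
    simpa [hzero] using this
  have hDle : ‖Df tstar (s - tstar)‖ ≤ α * r := by
    calc ‖Df tstar (s - tstar)‖ ≤ ‖Df tstar‖ * ‖s - tstar‖ := (Df tstar).le_opNorm _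
      _ ≤ α * r := mul_le_mul_of_nonneg_right hnorm (norm_nonneg _)
  have hts : ‖tstar - s‖ = r := by rw [hr, norm_sub_rev]
  constructor
  · constructor
    · -- lower estimate
      have h1 : ‖f s‖ ≤ α * r + L / 2 * r ^ 2 := by
        calc ‖f s‖ ≤ ‖Df tstar (s - tstar)‖ + ‖f s - Df tstar (s - tstar)‖ := by
              have := norm_add_le (Df tstar (s - tstar)) (f s - Df tstar (s - tstar))
              simpa using this
          _ ≤ α * r + L / 2 * r ^ 2 := add_le_add hDle htay
      have h2 : L / 2 * r ≤ α := by
        have hrb : r ≤ 2 * α / L := le_trans hrR.le hR2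
        rw [le_div_iff₀ hL] at hrb
        nlinarith
      have h3 : ‖f s‖ ≤ 2 * α * r := by nlinarith
      rw [hts, div_mul_eq_mul_div, div_le_iff₀ (by positivity : (0:ℝ) < 2 * α)]
      nlinarith
    · -- upper estimate
      have h1 : r ≤ κ * (‖f s‖ + L / 2 * r ^ 2) := by
        refine le_trans (hlow (s - tstar)) (mul_le_mul_of_nonneg_left ?_ hκ.le)
        calc ‖Df tstar (s - tstar)‖
            ≤ ‖f s‖ + ‖f s - Df tstar (s - tstar)‖ := by
              have := norm_sub_le (f s) (f s - Df tstar (s - tstar))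
              simpa using this
          _ ≤ ‖f s‖ + L / 2 * r ^ 2 := by linarith [htay]
      have h2 : κ * (L / 2) * r ≤ 1 / 2 := by
        have hrk : r ≤ 1 / (κ * L) := le_trans hrR.le hR1
        rw [le_div_iff₀ (by positivity : (0:ℝ) < κ * L)] at hrk
        nlinarith
      rw [hts]
      nlinarith [norm_nonneg (f s), mul_le_mul_of_nonneg_right h2 hr0]
  · exact ⟨hinj s hs, fun hfs => hinj s hs tstar (mem_ball_self hRpos) (by rw [hfs, hzero])⟩
end

section
/- Let X and Y be real Banach spaces, f : X → Y a map, s₀ ∈ X, and δ > 0 such that f is Fréchet differentiable at every point of the closed ball of radius δ centred at s₀, with derivative Df satisfying ‖Df(s₁) − Df(s₂)‖_{op} ≤ L·‖s₁ − s₂‖ on that ball, L > 0. Assume Df(s₀) is a continuous linear bijection with continuous inverse and ‖Df(s₀)⁻¹‖_{op} ≤ κ with κ > 0. If t* ∈ X satisfies f(t*) = 0 and ‖t* − s₀‖ ≤ min{δ, 1/(κL)}, then ‖t* − s₀‖ ≤ 2κ·‖f(s₀)‖. -/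
/-- Let `X`, `Y` be real Banach spaces, `f : X → Y`, `s₀ ∈ X`, and `δ > 0`
such that `f` is Fréchet differentiable on the closed ball of radius `δ` about `s₀`, with
derivative `Df` that is `L`-Lipschitz there (`L > 0`).  Assume `Df(s₀)` is a continuous
linear bijection with continuous inverse and `‖Df(s₀)⁻¹‖ ≤ κ` with `κ > 0`.  If `t* ∈ X`
satisfies `f(t*) = 0` and `‖t* − s₀‖ ≤ min{δ, 1/(κL)}`, then `‖t* − s₀‖ ≤ 2κ·‖f(s₀)‖`. -/
theorem cc_residual_error_estimate
    {X Y : Type*} [NormedAddCommGroup X] [NormedSpace ℝ X] [CompleteSpace X]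
    [NormedAddCommGroup Y] [NormedSpace ℝ Y] [CompleteSpace Y]
    (f : X → Y) (s₀ : X)
    (δ : ℝ) (hδ : 0 < δ) (Df : X → (X →L[ℝ] Y))
    (hdiff : ∀ s ∈ Metric.closedBall s₀ δ, HasFDerivAt f (Df s) s)
    (L : ℝ) (hL : 0 < L)
    (hlip : ∀ s₁ ∈ Metric.closedBall s₀ δ, ∀ s₂ ∈ Metric.closedBall s₀ δ,
      ‖Df s₁ - Df s₂‖ ≤ L * ‖s₁ - s₂‖)
    (e : X ≃L[ℝ] Y) (he : (e : X →L[ℝ] Y) = Df s₀)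
    (κ : ℝ) (hκ : 0 < κ) (hinv : ‖(e.symm : Y →L[ℝ] X)‖ ≤ κ)
    (tstar : X) (hzero : f tstar = 0)
    (hclose : ‖tstar - s₀‖ ≤ min δ (1 / (κ * L))) :
    ‖tstar - s₀‖ ≤ 2 * κ * ‖f s₀‖ := by
  set v : X := tstar - s₀ with hv
  have hvδ : ‖v‖ ≤ δ := hclose.trans (min_le_left _ _)
  have hvκL : κ * L * ‖v‖ ≤ 1 := by
    have h1 : ‖v‖ ≤ 1 / (κ * L) := hclose.trans (min_le_right _ _)
    have hκL : 0 < κ * L := mul_pos hκ hL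
    calc κ * L * ‖v‖ ≤ κ * L * (1 / (κ * L)) := by
          exact mul_le_mul_of_nonneg_left h1 hκL.le
      _ = 1 := by field_simp
  -- membership of the segment in the closed ball
  have hmem : ∀ θ ∈ Set.Icc (0:ℝ) 1, s₀ + θ • v ∈ Metric.closedBall s₀ δ := by
    intro θ hθ
    rw [Metric.mem_closedBall, dist_eq_norm]
    rw [add_sub_cancel_left, norm_smul, Real.norm_eq_abs, abs_of_nonneg hθ.1]
    calc θ * ‖v‖ ≤ 1 * ‖v‖ :=
          mul_le_mul_of_nonneg_right hθ.2 (norm_nonneg _)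
      _ ≤ δ := by simpa using hvδ
  -- the auxiliary function
  set g : ℝ → Y := fun θ => f (s₀ + θ • v) - f s₀ - θ • (Df s₀ v) with hg
  have hg' : ∀ θ ∈ Set.Icc (0:ℝ) 1,
      HasDerivAt g (Df (s₀ + θ • v) v - Df s₀ v) θ := by
    intro θ hθ
    have hinner : HasDerivAt (fun θ : ℝ => s₀ + θ • v) v θ := by
      simpa using ((hasDerivAt_id θ).smul_const v).const_add s₀
    have houter : HasFDerivAt f (Df (s₀ + θ • v)) (s₀ + θ • v) :=
      hdiff _ (hmem θ hθ)
    have hcomp : HasDerivAt (fun θ : ℝ => f (s₀ + θ • v)) (Df (s₀ + θ • v) v) θ := by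
      exact houter.comp_hasDerivAt θ hinner
    have hlin : HasDerivAt (fun θ : ℝ => θ • (Df s₀ v)) (Df s₀ v) θ := by
      simpa using (hasDerivAt_id θ).smul_const (Df s₀ v)
    exact ((hcomp.sub (hasDerivAt_const θ (f s₀))).sub hlin).congr_deriv (by simp)
  -- bound on the derivative of g
  have hbound : ∀ θ ∈ Set.Icc (0:ℝ) 1,
      ‖Df (s₀ + θ • v) v - Df s₀ v‖ ≤ L * ‖v‖ ^ 2 * θ := by
    intro θ hθ
    have h1 : ‖Df (s₀ + θ • v) v - Df s₀ v‖ ≤ ‖Df (s₀ + θ • v) - Df s₀‖ * ‖v‖ := by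
      have := (Df (s₀ + θ • v) - Df s₀).le_opNorm v
      simpa using this
    have h2 : ‖Df (s₀ + θ • v) - Df s₀‖ ≤ L * (θ * ‖v‖) := by
      have := hlip _ (hmem θ hθ) s₀ (by simpa using hδ.le)
      have heq : ‖s₀ + θ • v - s₀‖ = θ * ‖v‖ := by
        rw [add_sub_cancel_left, norm_smul, Real.norm_eq_abs, abs_of_nonneg hθ.1]
      rwa [heq] at this
    calc ‖Df (s₀ + θ • v) v - Df s₀ v‖ ≤ ‖Df (s₀ + θ • v) - Df s₀‖ * ‖v‖ := h1
      _ ≤ L * (θ * ‖v‖) * ‖v‖ := mul_le_mul_of_nonneg_right h2 (norm_nonneg _)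
      _ = L * ‖v‖ ^ 2 * θ := by ring
  -- fencing theorem: ‖g 1‖ ≤ L‖v‖²/2
  have hB : ∀ θ : ℝ, HasDerivAt (fun θ : ℝ => L * ‖v‖ ^ 2 * θ ^ 2 / 2)
      (L * ‖v‖ ^ 2 * θ) θ := by
    intro θ
    have := ((hasDerivAt_pow 2 θ).const_mul (L * ‖v‖ ^ 2)).div_const 2
    refine this.congr_deriv ?_
    norm_num
    ring
  have hkey : ‖g 1‖ ≤ L * ‖v‖ ^ 2 * 1 ^ 2 / 2 := by
    refine image_norm_le_of_norm_deriv_right_le_deriv_boundary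
      (f := g) (f' := fun θ => Df (s₀ + θ • v) v - Df s₀ v)
      (a := 0) (b := 1)
      (fun θ hθ => (hg' θ hθ).continuousAt.continuousWithinAt)
      (fun θ hθ => (hg' θ (Set.mem_Icc_of_Ico hθ)).hasDerivWithinAt) ?_ hB
      (fun θ hθ => hbound θ (Set.mem_Icc_of_Ico hθ)) (Set.right_mem_Icc.2 zero_le_one)
    · simp [hg]
  have hg1 : g 1 = - f s₀ - Df s₀ v := by
    simp [hg, hv, hzero]
  rw [hg1] at hkey
  -- deduce ‖Df s₀ v‖ ≤ ‖f s₀‖ + L‖v‖²/2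
  have hDf : ‖Df s₀ v‖ ≤ ‖f s₀‖ + L * ‖v‖ ^ 2 / 2 := by
    have : ‖Df s₀ v‖ ≤ ‖f s₀‖ + ‖-f s₀ - Df s₀ v‖ := by
      have h := norm_sub_le (-f s₀) (-f s₀ - Df s₀ v)
      have h2 : -f s₀ - (-f s₀ - Df s₀ v) = Df s₀ v := by abel
      rw [h2, norm_neg] at h
      linarith
    nlinarith [hkey]
  -- use the inverse bound
  have hv_le : ‖v‖ ≤ κ * ‖Df s₀ v‖ := by
    have h1 : e.symm (Df s₀ v) = v := by
      rw [← he]; exact e.symm_apply_apply v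
    calc ‖v‖ = ‖e.symm (Df s₀ v)‖ := by rw [h1]
      _ ≤ ‖(e.symm : Y →L[ℝ] X)‖ * ‖Df s₀ v‖ := (e.symm : Y →L[ℝ] X).le_opNorm _
      _ ≤ κ * ‖Df s₀ v‖ := mul_le_mul_of_nonneg_right hinv (norm_nonneg _)
  -- combine
  have hfinal : ‖v‖ ≤ κ * ‖f s₀‖ + κ * L * ‖v‖ ^ 2 / 2 := by
    calc ‖v‖ ≤ κ * ‖Df s₀ v‖ := hv_le
      _ ≤ κ * (‖f s₀‖ + L * ‖v‖ ^ 2 / 2) := mul_le_mul_of_nonneg_left hDf hκ.le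
      _ = κ * ‖f s₀‖ + κ * L * ‖v‖ ^ 2 / 2 := by ring
  nlinarith [norm_nonneg v, hvκL]
end

section
/- Assume the uniform discrete inf-sup condition: there exist Υ > 0 and K₀ ∈ ℕ such that for all K ≥ K₀ and all w ∈ V_K, sup{⟨w, Df(t*)s⟩ : s ∈ V_K, ‖s‖ ≤ 1} ≥ Υ·‖w‖. Then there exist K₁ ∈ ℕ, δ₀ > 0 and C > 0 such that for every K ≥ K₁ the Galerkin problem associated with V_K has a unique solution t_K with ‖t_K − t*‖ ≤ δ₀, and this solution satisfies the quasi-optimal error bound ‖t_K − t*‖ ≤ C · inf{‖s − t*‖ : s ∈ V_K}. -/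
set_option maxHeartbeats 2000000

open scoped RealInnerProductSpace

lemma cc_aux_norm_eq_zero_of_le {E : Type*} [NormedAddCommGroup E] {Υ : ℝ} (hΥ : 0 < Υ)
    {v : E} (h : Υ * ‖v‖ ≤ 0) : v = 0 := by
  have : ‖v‖ ≤ 0 := nonpos_of_mul_nonpos_right (by linarith [mul_comm Υ ‖v‖]) hΥ
  exact norm_le_zero_iff.mp this

lemma cc_aux_adjoint_lower_bound {E : Type*} [NormedAddCommGroup E] [InnerProductSpace ℝ E]
    [FiniteDimensional ℝ E] (B : E →L[ℝ] E) {Υ : ℝ} (hΥ : 0 < Υ)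
    (h : ∀ w, Υ * ‖w‖ ≤ ‖(ContinuousLinearMap.adjoint B) w‖) :
    (∀ v, Υ * ‖v‖ ≤ ‖B v‖) ∧ Function.Bijective B := by
  have hadj_inj : Function.Injective (ContinuousLinearMap.adjoint B : E →ₗ[ℝ] E) := by
    intro w₁ w₂ hw
    have h1 := h (w₁ - w₂)
    rw [show (ContinuousLinearMap.adjoint B) (w₁ - w₂)
        = (ContinuousLinearMap.adjoint B : E →ₗ[ℝ] E) w₁
          - (ContinuousLinearMap.adjoint B : E →ₗ[ℝ] E) w₂ from map_sub _ _ _, hw,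
      sub_self, norm_zero] at h1
    exact sub_eq_zero.mp (cc_aux_norm_eq_zero_of_le hΥ h1)
  have hadj_surj : Function.Surjective (ContinuousLinearMap.adjoint B : E →ₗ[ℝ] E) :=
    (LinearMap.injective_iff_surjective).mp hadj_inj
  have hlow : ∀ v, Υ * ‖v‖ ≤ ‖B v‖ := by
    intro v
    rcases hadj_surj v with ⟨u, hu⟩
    rcases eq_or_ne v 0 with rfl | hv
    · simp
    have hnv : (0:ℝ) < ‖v‖ := norm_pos_iff.mpr hv
    have hinner : ‖v‖ ^ 2 = ⟪u, B v⟫ := by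
      rw [← ContinuousLinearMap.adjoint_inner_left]
      have : ((ContinuousLinearMap.adjoint B) u : E) = v := hu
      rw [this, real_inner_self_eq_norm_sq]
    have hub : Υ * ‖u‖ ≤ ‖v‖ := by
      have := h u
      rwa [show ((ContinuousLinearMap.adjoint B) u : E) = v from hu] at this
    have h2 : ‖v‖ ^ 2 ≤ ‖u‖ * ‖B v‖ := by
      rw [hinner]; exact real_inner_le_norm _ _
    have h3 : Υ * ‖v‖ ^ 2 ≤ ‖v‖ * ‖B v‖ := by
      calc Υ * ‖v‖ ^ 2 ≤ Υ * (‖u‖ * ‖B v‖) := mul_le_mul_of_nonneg_left h2 hΥ.le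
        _ = (Υ * ‖u‖) * ‖B v‖ := by ring
        _ ≤ ‖v‖ * ‖B v‖ := mul_le_mul_of_nonneg_right hub (norm_nonneg _)
    nlinarith [norm_nonneg (B v)]
  have hinj : Function.Injective (B : E →ₗ[ℝ] E) := by
    intro v₁ v₂ hv
    have h1 := hlow (v₁ - v₂)
    rw [show B (v₁ - v₂) = (B : E →ₗ[ℝ] E) v₁ - (B : E →ₗ[ℝ] E) v₂ from map_sub _ _ _, hv,
      sub_self, norm_zero] at h1
    exact sub_eq_zero.mp (cc_aux_norm_eq_zero_of_le hΥ h1)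
  exact ⟨hlow, hinj, (LinearMap.injective_iff_surjective).mp hinj⟩

/-- Let `𝓗` be a real Hilbert space, `f : 𝓗 → 𝓗` a map with a zero `t*`,
Fréchet differentiable on a closed ball of radius `δ > 0` about `t*` with derivative `Df`
Lipschitz there with constant `L > 0`; let `(V_K)` be an increasing sequence of
finite-dimensional subspaces with dense union.  Assume the uniform discrete inf-sup
condition: there are `Υ > 0` and `K₀` such that for all `K ≥ K₀` and all `w ∈ V_K`,
`sup{⟨w, Df(t*)s⟩ : s ∈ V_K, ‖s‖ ≤ 1} ≥ Υ·‖w‖`.  Then there exist `K₁`, `δ₀ > 0` and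
`C > 0` such that for every `K ≥ K₁` the Galerkin problem for `V_K` (find `t ∈ V_K` with
`⟨s, f(t)⟩ = 0` for all `s ∈ V_K`) has a unique solution `t_K` with `‖t_K − t*‖ ≤ δ₀`,
and this solution satisfies `‖t_K − t*‖ ≤ C·inf{‖s − t*‖ : s ∈ V_K}`. -/
theorem cc_galerkin_quasi_optimality
    {𝓗 : Type*} [NormedAddCommGroup 𝓗] [InnerProductSpace ℝ 𝓗] [CompleteSpace 𝓗]
    (f : 𝓗 → 𝓗) (tstar : 𝓗) (hzero : f tstar = 0)
    (δ : ℝ) (hδ : 0 < δ) (Df : 𝓗 → (𝓗 →L[ℝ] 𝓗))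
    (hdiff : ∀ s ∈ Metric.closedBall tstar δ, HasFDerivAt f (Df s) s)
    (L : ℝ) (hL : 0 < L)
    (hlip : ∀ s₁ ∈ Metric.closedBall tstar δ, ∀ s₂ ∈ Metric.closedBall tstar δ,
      ‖Df s₁ - Df s₂‖ ≤ L * ‖s₁ - s₂‖)
    (V : ℕ → Submodule ℝ 𝓗) (hfd : ∀ K, FiniteDimensional ℝ (V K))
    (hmono : ∀ K, V K ≤ V (K + 1))
    (hdense : Dense (⋃ K, (V K : Set 𝓗)))
    (Υ : ℝ) (hΥ : 0 < Υ) (K₀ : ℕ)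
    (hinfsup : ∀ K, K₀ ≤ K → ∀ w ∈ V K,
      Υ * ‖w‖ ≤ sSup {r : ℝ | ∃ s ∈ V K, ‖s‖ ≤ 1 ∧ r = ⟪w, Df tstar s⟫}) :
    ∃ K₁ : ℕ, ∃ δ₀ > 0, ∃ C > 0, ∀ K, K₁ ≤ K →
      ∃ tK : 𝓗,
        (tK ∈ V K ∧ (∀ s ∈ V K, ⟪s, f tK⟫ = 0) ∧ ‖tK - tstar‖ ≤ δ₀) ∧
        (∀ t' : 𝓗, t' ∈ V K → (∀ s ∈ V K, ⟪s, f t'⟫ = 0) → ‖t' - tstar‖ ≤ δ₀ → t' = tK) ∧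
        ‖tK - tstar‖ ≤ C * sInf ((fun s : 𝓗 => ‖s - tstar‖) '' (V K : Set 𝓗)) := by
  classical
  haveI := hfd
  set A : 𝓗 →L[ℝ] 𝓗 := Df tstar with hA
  set M : ℝ := ‖A‖ + L * δ with hM
  have hMpos : 0 < M := by positivity
  set C : ℝ := 2 * M / Υ + 1 with hC
  have hCpos : 0 < C := by positivity
  have hCge1 : 1 ≤ C := by
    have h0 : 0 ≤ 2 * M / Υ := by positivity
    rw [hC]; linarith
  set δ₀ : ℝ := min δ (Υ / (2 * L)) with hδ₀
  have hδ₀pos : 0 < δ₀ := lt_min hδ (by positivity)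
  have hδ₀δ : δ₀ ≤ δ := min_le_left _ _
  have hδ₀Υ : L * δ₀ ≤ Υ / 2 := by
    have h1 : δ₀ ≤ Υ / (2 * L) := min_le_right _ _
    calc L * δ₀ ≤ L * (Υ / (2 * L)) := mul_le_mul_of_nonneg_left h1 hL.le
      _ = Υ / 2 := by field_simp
  set ε₀ : ℝ := min (δ₀ / C) (Υ / (2 * L * C)) with hε₀
  have hε₀pos : 0 < ε₀ := lt_min (by positivity) (by positivity)
  -- find K₁ via density
  have hmono' : ∀ {J K : ℕ}, J ≤ K → V J ≤ V K := by
    intro J K hJK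
    induction hJK with
    | refl => exact le_rfl
    | step h ih => exact le_trans ih (hmono _)
  obtain ⟨J, x, hxV, hxdist⟩ : ∃ J : ℕ, ∃ x : 𝓗, x ∈ V J ∧ ‖x - tstar‖ ≤ ε₀ := by
    obtain ⟨x, hx⟩ := (Metric.dense_iff.mp hdense) tstar ε₀ hε₀pos
    obtain ⟨hx1, hx2⟩ := hx
    obtain ⟨sJ, ⟨J, rfl⟩, hxJ⟩ := hx2
    refine ⟨J, x, hxJ, ?_⟩
    have : dist x tstar < ε₀ := Metric.mem_ball.mp hx1
    rw [dist_eq_norm] at this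
    exact this.le
  refine ⟨max J K₀, δ₀, hδ₀pos, C, hCpos, ?_⟩
  intro K hK
  have hKJ : J ≤ K := le_trans (le_max_left _ _) hK
  have hKK₀ : K₀ ≤ K := le_trans (le_max_right _ _) hK
  haveI : CompleteSpace (V K) := FiniteDimensional.complete ℝ _
  set P := (V K).orthogonalProjectionOnto with hP
  set incl := (V K).subtypeL with hincl
  set u : V K := P tstar with hu
  set d : ℝ := ‖(u : 𝓗) - tstar‖ with hd
  have hdnonneg : 0 ≤ d := norm_nonneg _
  -- d is a lower bound for the distances from tstar to elements of V K
  have hdmin : ∀ s ∈ V K, d ≤ ‖s - tstar‖ := by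
    intro s hs
    have hmin : ‖tstar - ((V K).orthogonalProjectionOnto tstar : 𝓗)‖ = ⨅ x : V K, ‖tstar - x‖ :=
        Submodule.starProjection_minimal (U := V K) tstar
    have hle : ⨅ x : V K, ‖tstar - ↑x‖ ≤ ‖tstar - s‖ := by
      have := ciInf_le (f := fun x : V K => ‖tstar - (x : 𝓗)‖)
        ⟨0, by rintro y ⟨w, rfl⟩; exact norm_nonneg _⟩ (⟨s, hs⟩ : V K)
      simpa using this
    rw [hd, norm_sub_rev, hu, hP]
    rw [hmin] at *
    rwa [norm_sub_rev s]
  have hdε : d ≤ ε₀ := le_trans (by simpa [norm_sub_rev] using hdmin x (hmono' hKJ hxV)) hxdist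
  have hCd₁ : C * d ≤ δ₀ := by
    have h1 : d ≤ δ₀ / C := le_trans hdε (min_le_left _ _)
    calc C * d ≤ C * (δ₀ / C) := mul_le_mul_of_nonneg_left h1 hCpos.le
      _ = δ₀ := by field_simp
  have hCd₂ : L * (C * d) ≤ Υ / 2 := by
    have h1 : d ≤ Υ / (2 * L * C) := le_trans hdε (min_le_right _ _)
    calc L * (C * d) ≤ L * (C * (Υ / (2 * L * C))) := by
          exact mul_le_mul_of_nonneg_left (mul_le_mul_of_nonneg_left h1 hCpos.le) hL.le
      _ = Υ / 2 := by field_simp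
  have hdδ₀ : d ≤ δ₀ := by
    have h1 : 1 * d ≤ C * d := mul_le_mul_of_nonneg_right hCge1 hdnonneg
    rw [one_mul] at h1
    exact le_trans h1 hCd₁
  -- the discrete linearized operator
  set B : V K →L[ℝ] V K := P.comp (A.comp incl) with hB
  have hBadj : ∀ w : V K, Υ * ‖w‖ ≤ ‖(ContinuousLinearMap.adjoint B) w‖ := by
    intro w
    have h1 := hinfsup K hKK₀ (w : 𝓗) w.2
    have h2 : sSup {r : ℝ | ∃ s ∈ V K, ‖s‖ ≤ 1 ∧ r = ⟪(w : 𝓗), A s⟫}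
        ≤ ‖(ContinuousLinearMap.adjoint B) w‖ := by
      apply csSup_le
      · exact ⟨0, 0, (V K).zero_mem, by simp, by simp⟩
      · rintro r ⟨s, hs, hs1, rfl⟩
        set s' : V K := ⟨s, hs⟩ with hs'
        have horth : ⟪(w : 𝓗), A s - ↑(P (A s))⟫ = 0 := by
          have hmem := Submodule.sub_starProjection_mem_orthogonal (K := V K) (A s)
          exact ((Submodule.mem_orthogonal (V K) _).mp hmem) (w : 𝓗) w.2
        have key : ⟪(w : 𝓗), A s⟫ = ⟪w, B s'⟫ := by
          have : (B s' : 𝓗) = ↑(P (A s)) := rfl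
          rw [Submodule.coe_inner, this]
          have := inner_sub_right (𝕜 := ℝ) (x := (w : 𝓗)) (y := A s) (z := ↑(P (A s)))
          have h0 : ⟪(w:𝓗), A s⟫ - ⟪(w:𝓗), ↑(P (A s))⟫ = 0 := by
            rw [← inner_sub_right]; exact horth
          linarith
        rw [key, ← ContinuousLinearMap.adjoint_inner_left]
        calc ⟪(ContinuousLinearMap.adjoint B) w, s'⟫
            ≤ ‖(ContinuousLinearMap.adjoint B) w‖ * ‖s'‖ := real_inner_le_norm _ _
          _ ≤ ‖(ContinuousLinearMap.adjoint B) w‖ * 1 := by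
              apply mul_le_mul_of_nonneg_left _ (norm_nonneg _)
              simpa [hs'] using hs1
          _ = _ := mul_one _
    calc Υ * ‖w‖ = Υ * ‖(w : 𝓗)‖ := by rw [Submodule.norm_coe]
      _ ≤ _ := le_trans h1 h2
  obtain ⟨hBlow, hBbij⟩ := cc_aux_adjoint_lower_bound B hΥ hBadj
  -- invert B
  have hBbij' : Function.Bijective (B.toLinearMap) := hBbij
  set e : V K ≃L[ℝ] V K :=
    (LinearEquiv.ofBijective B.toLinearMap hBbij').toContinuousLinearEquiv with he_def
  have he : ∀ v, e v = B v := fun v => rfl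
  have hesymmB : ∀ v, e.symm (B v) = v := by
    intro v; rw [← he v, e.symm_apply_apply]
  have hesymm_norm : ∀ v, ‖e.symm v‖ ≤ (1 / Υ) * ‖v‖ := by
    intro v
    have h1 := hBlow (e.symm v)
    rw [← he (e.symm v), e.apply_symm_apply] at h1
    rw [one_div, inv_mul_eq_div, le_div_iff₀ hΥ, mul_comm]
    exact h1
  -- the discrete nonlinear map and its derivative
  set G : V K → V K := fun t => P (f (t : 𝓗)) with hG
  set DG : V K → (V K →L[ℝ] V K) := fun t => P.comp ((Df (t : 𝓗)).comp incl) with hDG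
  have hGderiv : ∀ t : V K, (t : 𝓗) ∈ Metric.closedBall tstar δ → HasFDerivAt G (DG t) t := by
    intro t ht
    have h1 : HasFDerivAt (⇑incl) incl t := incl.hasFDerivAt
    have h2 : HasFDerivAt (f ∘ ⇑incl) ((Df (t : 𝓗)).comp incl) t := by
      have := (hdiff (t : 𝓗) ht).comp t h1
      exact this
    have h3 := (P.hasFDerivAt (x := (f ∘ ⇑incl) t)).comp t h2
    exact h3
  have hPnorm : ∀ y : 𝓗, ‖P y‖ ≤ ‖y‖ := by
    intro y
    have h1 := ((V K).orthogonalProjectionOnto).le_opNorm y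
    have h2 := Submodule.orthogonalProjectionOnto_norm_le (V K)
    rw [← hP] at h1 h2
    have h3 : ‖P‖ * ‖y‖ ≤ 1 * ‖y‖ := mul_le_mul_of_nonneg_right h2 (norm_nonneg y)
    rw [one_mul] at h3
    exact le_trans h1 h3
  have hDGB : ∀ t : V K, (t : 𝓗) ∈ Metric.closedBall tstar δ →
      ‖DG t - B‖ ≤ L * ‖(t : 𝓗) - tstar‖ := by
    intro t ht
    have heq : DG t - B = P.comp ((Df (t : 𝓗) - A).comp incl) := by
      ext v
      simp [hDG, hB, ContinuousLinearMap.sub_apply, map_sub]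
    rw [heq]
    apply ContinuousLinearMap.opNorm_le_bound _ (by positivity)
    intro v
    have h1 : ‖P ((Df (t : 𝓗) - A) (incl v))‖ ≤ ‖(Df (t : 𝓗) - A) (incl v)‖ := hPnorm _
    have h2 : ‖(Df (t : 𝓗) - A) (incl v)‖ ≤ ‖Df (t : 𝓗) - A‖ * ‖(v : 𝓗)‖ :=
      (Df (t : 𝓗) - A).le_opNorm _
    have h3 : ‖Df (t : 𝓗) - A‖ ≤ L * ‖(t : 𝓗) - tstar‖ :=
      hlip _ ht tstar (Metric.mem_closedBall_self hδ.le)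
    have h4 : ‖(v : 𝓗)‖ = ‖v‖ := Submodule.norm_coe v
    calc ‖(P.comp ((Df (t : 𝓗) - A).comp incl)) v‖
        = ‖P ((Df (t : 𝓗) - A) (incl v))‖ := rfl
      _ ≤ ‖Df (t : 𝓗) - A‖ * ‖(v : 𝓗)‖ := le_trans h1 h2
      _ ≤ (L * ‖(t : 𝓗) - tstar‖) * ‖v‖ := by
          rw [h4]; exact mul_le_mul_of_nonneg_right h3 (norm_nonneg _)
  -- the ball for the fixed point argument
  set r : ℝ := 2 * M / Υ * d with hr
  have hr0 : 0 ≤ r := by positivity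
  have hrd : r + d = C * d := by rw [hr, hC]; ring
  set S : Set (V K) := Metric.closedBall u r with hS
  have hSball : ∀ y ∈ S, ‖(y : 𝓗) - tstar‖ ≤ C * d := by
    intro y hy
    have h1 : ‖y - u‖ ≤ r := by
      rw [hS, Metric.mem_closedBall, dist_eq_norm] at hy; exact hy
    have h2 : ‖(y : 𝓗) - tstar‖ ≤ ‖(y : 𝓗) - (u : 𝓗)‖ + ‖(u : 𝓗) - tstar‖ :=
      norm_sub_le_norm_sub_add_norm_sub _ _ _
    have h3 : ‖(y : 𝓗) - (u : 𝓗)‖ = ‖y - u‖ := by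
      rw [← Submodule.coe_sub, Submodule.norm_coe]
    rw [← hrd]
    rw [h3] at h2
    rw [← hd] at h2
    linarith
  have hSδ₀ : ∀ y ∈ S, ‖(y : 𝓗) - tstar‖ ≤ δ₀ := fun y hy => le_trans (hSball y hy) hCd₁
  have hSδ : ∀ y ∈ S, (y : 𝓗) ∈ Metric.closedBall tstar δ := by
    intro y hy
    rw [Metric.mem_closedBall, dist_eq_norm]
    exact le_trans (hSδ₀ y hy) hδ₀δ
  -- mean value estimate on S
  have hMVT : ∀ y ∈ S, ∀ z ∈ S,
      ‖G z - G y - B (z - y)‖ ≤ (L * (C * d)) * ‖z - y‖ := by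
    intro y hy z hz
    apply (convex_closedBall u r).norm_image_sub_le_of_norm_hasFDerivWithin_le'
      (fun x hx => (hGderiv x (hSδ x hx)).hasFDerivWithinAt) _ hy hz
    intro x hx
    calc ‖DG x - B‖ ≤ L * ‖(x : 𝓗) - tstar‖ := hDGB x (hSδ x hx)
      _ ≤ L * (C * d) := mul_le_mul_of_nonneg_left (hSball x hx) hL.le
  -- the fixed point map
  set Φ : V K → V K := fun t => t - e.symm (G t) with hΦ
  have hcontr : ∀ t₁ ∈ S, ∀ t₂ ∈ S, ‖Φ t₁ - Φ t₂‖ ≤ (1 / 2) * ‖t₁ - t₂‖ := by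
    intro t₁ h₁ t₂ h₂
    have key : Φ t₁ - Φ t₂ = e.symm (B (t₁ - t₂) - (G t₁ - G t₂)) := by
      rw [map_sub, hesymmB, hΦ]
      simp only [map_sub]
      abel
    have h4 : ‖B (t₁ - t₂) - (G t₁ - G t₂)‖ ≤ (L * (C * d)) * ‖t₁ - t₂‖ := by
      rw [norm_sub_rev]
      exact hMVT t₂ h₂ t₁ h₁
    calc ‖Φ t₁ - Φ t₂‖ = ‖e.symm (B (t₁ - t₂) - (G t₁ - G t₂))‖ := by rw [key]
      _ ≤ (1 / Υ) * ‖B (t₁ - t₂) - (G t₁ - G t₂)‖ := hesymm_norm _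
      _ ≤ (1 / Υ) * ((L * (C * d)) * ‖t₁ - t₂‖) := by
          apply mul_le_mul_of_nonneg_left h4 (by positivity)
      _ ≤ (1 / Υ) * ((Υ / 2) * ‖t₁ - t₂‖) := by
          apply mul_le_mul_of_nonneg_left _ (by positivity)
          exact mul_le_mul_of_nonneg_right hCd₂ (norm_nonneg _)
      _ = (1 / 2) * ‖t₁ - t₂‖ := by field_simp
  have humem : u ∈ S := Metric.mem_closedBall_self hr0
  have hGu : ‖G u‖ ≤ M * d := by
    have h1 : ‖G u‖ ≤ ‖f (u : 𝓗)‖ := hPnorm _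
    have h2 : ‖f (u : 𝓗) - f tstar‖ ≤ M * ‖(u : 𝓗) - tstar‖ := by
      apply (convex_closedBall tstar δ).norm_image_sub_le_of_norm_hasFDerivWithin_le
        (fun x hx => (hdiff x hx).hasFDerivWithinAt) _
        (Metric.mem_closedBall_self hδ.le)
      · rw [Metric.mem_closedBall, dist_eq_norm, ← hd]
        exact le_trans hdδ₀ hδ₀δ
      · intro x hx
        have h3 : ‖Df x - A‖ ≤ L * ‖x - tstar‖ :=
          hlip x hx tstar (Metric.mem_closedBall_self hδ.le)
        have h4 : ‖x - tstar‖ ≤ δ := by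
          rw [Metric.mem_closedBall, dist_eq_norm] at hx; exact hx
        have h5 : ‖Df x‖ ≤ ‖Df x - A‖ + ‖A‖ := by
          have := norm_add_le (Df x - A) A
          rwa [sub_add_cancel] at this
        have h6 : L * ‖x - tstar‖ ≤ L * δ := mul_le_mul_of_nonneg_left h4 hL.le
        calc ‖Df x‖ ≤ ‖Df x - A‖ + ‖A‖ := h5
          _ ≤ L * ‖x - tstar‖ + ‖A‖ := by linarith only [h3]
          _ ≤ M := by rw [hM]; linarith only [h6]
    rw [hzero, sub_zero, ← hd] at h2
    exact le_trans h1 h2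
  have hmaps : Set.MapsTo Φ S S := by
    intro t ht
    have h1 : ‖Φ t - Φ u‖ ≤ (1 / 2) * ‖t - u‖ := hcontr t ht u humem
    have h2 : ‖Φ u - u‖ ≤ (1 / Υ) * (M * d) := by
      have : Φ u - u = -(e.symm (G u)) := by rw [hΦ]; simp
      rw [this, norm_neg]
      exact le_trans (hesymm_norm _) (mul_le_mul_of_nonneg_left hGu (by positivity))
    have h3 : ‖t - u‖ ≤ r := by
      rw [hS, Metric.mem_closedBall, dist_eq_norm] at ht; exact ht
    have h4 : (1 / Υ) * (M * d) = r / 2 := by rw [hr]; field_simp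
    rw [hS, Metric.mem_closedBall, dist_eq_norm]
    calc ‖Φ t - u‖ ≤ ‖Φ t - Φ u‖ + ‖Φ u - u‖ := norm_sub_le_norm_sub_add_norm_sub _ _ _
      _ ≤ (1 / 2) * ‖t - u‖ + (1 / Υ) * (M * d) := by linarith
      _ ≤ (1 / 2) * r + r / 2 := by rw [h4]; linarith
      _ = r := by ring
  have hScomplete : IsComplete S := Metric.isClosed_closedBall.isComplete
  have hcontr' : ContractingWith (1 / 2 : NNReal) (hmaps.restrict Φ S S) := by
    constructor
    · have h0 : ((1 / 2 : NNReal) : ℝ) < ((1 : NNReal) : ℝ) := by norm_num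
      exact_mod_cast h0
    · apply LipschitzWith.of_dist_le_mul
      rintro ⟨x, hx⟩ ⟨y, hy⟩
      have h1 := hcontr x hx y hy
      rw [Subtype.dist_eq, Set.MapsTo.val_restrict_apply, Set.MapsTo.val_restrict_apply,
        dist_eq_norm, Subtype.dist_eq, dist_eq_norm]
      calc ‖Φ x - Φ y‖ ≤ (1 / 2) * ‖x - y‖ := h1
        _ = ((1 / 2 : NNReal) : ℝ) * ‖x - y‖ := by norm_num
  obtain ⟨tE, htES, htfix, -, -⟩ :=
    hcontr'.exists_fixedPoint' hScomplete hmaps humem (edist_ne_top _ _)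
  have hGzero : G tE = 0 := by
    have h1 : tE - e.symm (G tE) = tE := htfix
    have h2 : e.symm (G tE) = 0 := by
      have := sub_eq_self.mp h1
      exact this
    have h3 : e.symm (G tE) = e.symm 0 := by rw [h2, map_zero]
    exact e.symm.injective h3
  have hforth : f (tE : 𝓗) ∈ (V K)ᗮ := by
    rw [← Submodule.orthogonalProjectionOnto_eq_zero_iff (K := V K), ← hP]
    exact hGzero
  have hGalerkin : ∀ s ∈ V K, ⟪s, f (tE : 𝓗)⟫ = 0 :=
    fun s hs => ((Submodule.mem_orthogonal (V K) _).mp hforth) s hs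
  have htEδ₀ : ‖(tE : 𝓗) - tstar‖ ≤ δ₀ := hSδ₀ tE htES
  refine ⟨(tE : 𝓗), ⟨tE.2, hGalerkin, htEδ₀⟩, ?_, ?_⟩
  · -- uniqueness
    intro t' ht'V ht'G ht'δ₀
    set t'E : V K := ⟨t', ht'V⟩ with ht'E
    have hGt' : G t'E = 0 := by
      rw [hG]
      show P (f t') = 0
      rw [hP, Submodule.orthogonalProjectionOnto_eq_zero_iff]
      exact (Submodule.mem_orthogonal (V K) _).mpr ht'G
    set S' : Set (V K) := (V K).subtype ⁻¹' (Metric.closedBall tstar δ₀) with hS'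
    have hS'conv : Convex ℝ S' := (convex_closedBall tstar δ₀).linear_preimage _
    have hS'mem : ∀ x : V K, ‖(x : 𝓗) - tstar‖ ≤ δ₀ → x ∈ S' := by
      intro x hx
      rw [hS', Set.mem_preimage, Metric.mem_closedBall, dist_eq_norm]
      exact hx
    have hS'δ : ∀ x ∈ S', (x : 𝓗) ∈ Metric.closedBall tstar δ := by
      intro x hx
      rw [hS', Set.mem_preimage, Metric.mem_closedBall] at hx
      rw [Metric.mem_closedBall]
      exact le_trans hx hδ₀δ
    have hMVT' : ‖G t'E - G tE - B (t'E - tE)‖ ≤ (Υ / 2) * ‖t'E - tE‖ := by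
      apply hS'conv.norm_image_sub_le_of_norm_hasFDerivWithin_le'
        (fun x hx => (hGderiv x (hS'δ x hx)).hasFDerivWithinAt) _
        (hS'mem tE htEδ₀) (hS'mem t'E ht'δ₀)
      intro x hx
      have h1 : ‖(x : 𝓗) - tstar‖ ≤ δ₀ := by
        rw [hS', Set.mem_preimage, Metric.mem_closedBall, dist_eq_norm] at hx; exact hx
      calc ‖DG x - B‖ ≤ L * ‖(x : 𝓗) - tstar‖ := hDGB x (hS'δ x hx)
        _ ≤ L * δ₀ := mul_le_mul_of_nonneg_left h1 hL.le
        _ ≤ Υ / 2 := hδ₀Υ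
    rw [hGt', hGzero, sub_zero, zero_sub, norm_neg] at hMVT'
    have h5 := hBlow (t'E - tE)
    have h6 : Υ * ‖t'E - tE‖ ≤ 0 := by linarith only [h5, hMVT']
    have h7 : t'E = tE := sub_eq_zero.mp (cc_aux_norm_eq_zero_of_le hΥ h6)
    exact congrArg Subtype.val h7
  · -- quasi-optimality
    have hinfle : d ≤ sInf ((fun s : 𝓗 => ‖s - tstar‖) '' (V K : Set 𝓗)) := by
      apply le_csInf
      · exact ⟨‖(0 : 𝓗) - tstar‖, Set.mem_image_of_mem _ (V K).zero_mem⟩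
      · rintro b ⟨s, hs, rfl⟩
        exact hdmin s hs
    calc ‖(tE : 𝓗) - tstar‖ ≤ C * d := hSball tE htES
      _ ≤ C * sInf ((fun s : 𝓗 => ‖s - tstar‖) '' (V K : Set 𝓗)) :=
          mul_le_mul_of_nonneg_left hinfle hCpos.le
end
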